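/- arXiv:2604.10826 — 6 statements merged into one kernel-verified Lean document; each statement's English description precedes it below -/
import Mathlib

section
/- Assume κ is an infinite cardinal with κ^{<κ} = κ. Then there is an antichain of size 2^κ in the forcing notion P(F*_κ): there exist 2^κ many conditions in P(F*_κ) that are pairwise incompatible. -/
open Cardinal Set

universe u

/-- A node of the tree `^{<κ}κ`: a function from an ordinal `dom < κ` (identified with
`κ.ord`) to ordinals `< κ.ord`, normalized to take value `0` outside its domain. -/
structure KNode (κ : Cardinal.{u}) : Type (u + 1) where
  dom : Ordinal.{u}
  dom_lt : dom < κ.ord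
  val : Ordinal.{u} → Ordinal.{u}
  val_lt : ∀ i, i < dom → val i < κ.ord
  val_zero : ∀ i, ¬ i < dom → val i = 0

namespace KNode

variable {κ : Cardinal.{u}}

/-- The restriction `s↾β` of a node `s` to a domain `β ≤ dom s`. -/
noncomputable def restrict (s : KNode κ) (β : Ordinal.{u}) (h : β ≤ s.dom) : KNode κ where
  dom := β
  dom_lt := lt_of_le_of_lt h s.dom_lt
  val := fun i => if i < β then s.val i else 0
  val_lt := fun i hi => by
    simp only [if_pos hi]; exact s.val_lt i (lt_of_lt_of_le hi h)
  val_zero := fun i hi => if_neg hi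

end KNode

/-- `p` is a subtree of `^{<κ}κ`: a nonempty set of nodes closed under restriction. -/
def IsSubtree {κ : Cardinal.{u}} (p : Set (KNode κ)) : Prop :=
  p.Nonempty ∧ ∀ s ∈ p, ∀ (β : Ordinal.{u}) (h : β ≤ s.dom), s.restrict β h ∈ p

/-- The set `{α < κ : s⌢⟨α⟩ ∈ p}` of immediate successor values of `s` in `p`. -/
def succSet {κ : Cardinal.{u}} (p : Set (KNode κ)) (s : KNode κ) : Set Ordinal.{u} :=
  {a | ∃ t ∈ p, t.dom = s.dom + 1 ∧ (∀ i, i < s.dom → t.val i = s.val i) ∧ t.val s.dom = a}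

/-- `s` is `F`-splitting in `p` if `{α < κ : s⌢⟨α⟩ ∈ p} ∈ F`. -/
def IsSplitting {κ : Cardinal.{u}} (F : Set (Set Ordinal.{u})) (p : Set (KNode κ))
    (s : KNode κ) : Prop :=
  succSet p s ∈ F

/-- The splitting history `deg_p(s) = {i < dom s : ∃ t ∈ p, t↾i = s↾i ∧ t i ≠ s i}`. -/
def deg {κ : Cardinal.{u}} (p : Set (KNode κ)) (s : KNode κ) : Set Ordinal.{u} :=
  {i | i < s.dom ∧ ∃ t ∈ p, i < t.dom ∧ (∀ j, j < i → t.val j = s.val j) ∧ t.val i ≠ s.val i}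

/-- `A` is a closed subset of the ordinal `δ` (in the order topology): every limit point
below `δ` of elements of `A` belongs to `A`. -/
def OrdClosedBelow (A : Set Ordinal.{u}) (δ : Ordinal.{u}) : Prop :=
  ∀ β, β < δ → Order.IsSuccLimit β → (∀ γ, γ < β → ∃ i ∈ A, γ < i ∧ i < β) → β ∈ A

/-- `p` is an `F`-perfect subtree of `^{<κ}κ`. -/
def IsFPerfect (κ : Cardinal.{u}) (F : Set (Set Ordinal.{u})) (p : Set (KNode κ)) : Prop :=
  IsSubtree p ∧
  (∀ β, β < κ.ord → ∃ s ∈ p, β ≤ s.dom) ∧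
  (∀ s ∈ p, ∃ t ∈ p, s.dom ≤ t.dom ∧ (∀ i, i < s.dom → t.val i = s.val i) ∧
    IsSplitting F p t) ∧
  (∀ s : KNode κ, Order.IsSuccLimit s.dom → (∀ β (h : β < s.dom), s.restrict β h.le ∈ p) → s ∈ p)

/-- The forcing notion `P(F)`: `F`-perfect trees satisfying (o) every successor set is a
singleton or a member of `F`, and (i) every splitting history is closed. A condition `q`
is stronger than `p` (`q ≥ p`) iff `q ⊆ p`. -/
def PF (κ : Cardinal.{u}) (F : Set (Set Ordinal.{u})) : Set (Set (KNode κ)) :=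
  {p | IsFPerfect κ F p ∧
    (∀ s ∈ p, (∃ a, succSet p s = {a}) ∨ succSet p s ∈ F) ∧
    (∀ s ∈ p, OrdClosedBelow (deg p s) s.dom)}

/-- Incompatibility of conditions in `P(F)`: no common extension. -/
def Incompat (κ : Cardinal.{u}) (F : Set (Set Ordinal.{u})) (p q : Set (KNode κ)) : Prop :=
  ¬ ∃ r ∈ PF κ F, r ⊆ p ∧ r ⊆ q

/-- The co-bounded filter `F*_κ` on `κ`: sets `A ⊆ κ` with `|κ \ A| < κ`. -/
def cobounded (κ : Cardinal.{u}) : Set (Set Ordinal.{u}) :=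
  {A | A ⊆ Set.Iio κ.ord ∧ #(↥(Set.Iio κ.ord \ A)) < Cardinal.lift.{u + 1} κ}

/-- `F` is a `(<κ)`-complete filter on `κ`. -/
def IsKappaCompleteFilterOn (κ : Cardinal.{u}) (F : Set (Set Ordinal.{u})) : Prop :=
  (∀ A ∈ F, A ⊆ Set.Iio κ.ord) ∧
  Set.Iio κ.ord ∈ F ∧
  (∀ A ∈ F, ∀ B, A ⊆ B → B ⊆ Set.Iio κ.ord → B ∈ F) ∧
  (∀ (ι : Type u) (f : ι → Set Ordinal.{u}), Nonempty ι → #ι < κ →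
    (∀ i, f i ∈ F) → (⋂ i, f i) ∈ F)

/-- `g : κ → κ` is a κ-branch of `q`: every restriction `g↾α`, `α < κ`, is a node of `q`. -/
def IsBranch {κ : Cardinal.{u}} (q : Set (KNode κ)) (g : Ordinal.{u} → Ordinal.{u}) : Prop :=
  ∀ α, α < κ.ord → ∃ s ∈ q, s.dom = α ∧ ∀ i, i < α → s.val i = g i

/-- `C` is a club (closed unbounded set) in `δ`. -/
def IsClubBelow (C : Set Ordinal.{u}) (δ : Ordinal.{u}) : Prop :=
  C ⊆ Set.Iio δ ∧ (∀ β, β < δ → ∃ i ∈ C, β < i) ∧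
  ∀ β, β < δ → Order.IsSuccLimit β → (∀ γ, γ < β → ∃ i ∈ C, γ < i ∧ i < β) → β ∈ C

/-- The dense set `D_f = {p ∈ P(F*_κ) : ∀ s ∈ p, ∀ i ∈ deg_p(s), s(i) > f(i)}`. -/
def Dset (κ : Cardinal.{u}) (f : Ordinal.{u} → Ordinal.{u}) : Set (Set (KNode κ)) :=
  {p | p ∈ PF κ (cobounded κ) ∧ ∀ s ∈ p, ∀ i ∈ deg p s, f i < s.val i}

namespace Stmt0Aux

open Ordinal

variable {κ : Cardinal.{u}}

theorem lt_succ_self' (a : Ordinal.{u}) : a < a + 1 := by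
  rw [Ordinal.add_one_eq_succ]; exact Order.lt_succ a

theorem lt_succ_iff' {a b : Ordinal.{u}} : a < b + 1 ↔ a ≤ b := by
  rw [Ordinal.add_one_eq_succ, Order.lt_succ_iff]

/-- The control level coding the ordinal `j`. -/
noncomputable def cl (j : Ordinal.{u}) : Ordinal.{u} :=
  ω * (j / ω) + (2 * (j % ω) + 1)

theorem two_mul_natCast (n : ℕ) : (2 : Ordinal.{u}) * (n : Ordinal) = ((2 * n : ℕ) : Ordinal) := by
  rw [Ordinal.natCast_mul, Nat.cast_ofNat]

theorem tail_lt (j : Ordinal.{u}) : 2 * (j % ω) + 1 < ω := by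
  obtain ⟨n, hn⟩ := Ordinal.lt_omega0.1 (Ordinal.mod_lt j Ordinal.omega0_ne_zero)
  rw [hn, two_mul_natCast, ← Nat.cast_one, ← Nat.cast_add]
  exact Ordinal.nat_lt_omega0 _

theorem tail2_lt (j : Ordinal.{u}) : 2 * (j % ω) < ω := by
  obtain ⟨n, hn⟩ := Ordinal.lt_omega0.1 (Ordinal.mod_lt j Ordinal.omega0_ne_zero)
  rw [hn, two_mul_natCast]
  exact Ordinal.nat_lt_omega0 _

theorem cl_div (j : Ordinal.{u}) : cl j / ω = j / ω := by
  rw [cl, Ordinal.mul_add_div _ Ordinal.omega0_ne_zero,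
    Ordinal.div_eq_zero_of_lt (tail_lt j), add_zero]

theorem cl_mod (j : Ordinal.{u}) : cl j % ω = 2 * (j % ω) + 1 := by
  rw [cl, Ordinal.mul_add_mod_self, Ordinal.mod_eq_of_lt (tail_lt j)]

theorem cl_injective : Function.Injective (cl : Ordinal.{u} → Ordinal.{u}) := by
  intro j j' h
  have hd : j / ω = j' / ω := by rw [← cl_div j, ← cl_div j', h]
  have hm' : 2 * (j % ω) + 1 = 2 * (j' % ω) + 1 := by rw [← cl_mod j, ← cl_mod j', h]
  have hm : j % ω = j' % ω := by
    obtain ⟨n, hn⟩ := Ordinal.lt_omega0.1 (Ordinal.mod_lt j Ordinal.omega0_ne_zero)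
    obtain ⟨n', hn'⟩ := Ordinal.lt_omega0.1 (Ordinal.mod_lt j' Ordinal.omega0_ne_zero)
    rw [hn, hn'] at hm' ⊢
    rw [two_mul_natCast, two_mul_natCast, ← Nat.cast_one, ← Nat.cast_add, ← Nat.cast_add,
      Nat.cast_inj] at hm'
    have : n = n' := by omega
    rw [this]
  conv_lhs => rw [← Ordinal.div_add_mod j ω]
  conv_rhs => rw [← Ordinal.div_add_mod j' ω]
  rw [hd, hm]

theorem cl_ne_limit {β : Ordinal.{u}} (hβ : Order.IsSuccLimit β) (j : Ordinal.{u}) : cl j ≠ β := by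
  intro h
  have h1 : (ω * (j / ω) + 2 * (j % ω)) + 1 = β := by rw [← h, cl, add_assoc]
  have h2 : ω * (j / ω) + 2 * (j % ω) < β := h1 ▸ lt_succ_self' _
  have := hβ.succ_lt h2
  rw [← Ordinal.add_one_eq_succ, h1] at this
  exact lt_irrefl _ this

theorem omega0_le_ord (hκ : ℵ₀ ≤ κ) : ω ≤ κ.ord := by
  rw [← Cardinal.ord_aleph0]; exact Cardinal.ord_le_ord.2 hκ

theorem add_lt_ord (hκ : ℵ₀ ≤ κ) {a b : Ordinal.{u}} (ha : a < κ.ord) (hb : b < κ.ord) :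
    a + b < κ.ord :=
  Ordinal.isPrincipal_add_ord hκ ha hb

theorem one_lt_ord (hκ : ℵ₀ ≤ κ) : (1 : Ordinal.{u}) < κ.ord :=
  lt_of_lt_of_le Ordinal.one_lt_omega0 (omega0_le_ord hκ)

theorem succ_lt_ord (hκ : ℵ₀ ≤ κ) {a : Ordinal.{u}} (ha : a < κ.ord) : a + 1 < κ.ord :=
  add_lt_ord hκ ha (one_lt_ord hκ)

theorem cl_lt_ord (hκ : ℵ₀ ≤ κ) {j : Ordinal.{u}} (hj : j < κ.ord) : cl j < κ.ord :=
  add_lt_ord hκ (lt_of_le_of_lt (Ordinal.mul_div_le j ω) hj)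
    (lt_of_lt_of_le (tail_lt j) (omega0_le_ord hκ))

-- The bit recording whether `j ∈ X`.
open Classical in
noncomputable def chi (X : Set Ordinal.{u}) (j : Ordinal.{u}) : Ordinal.{u} :=
  if j ∈ X then 1 else 0

theorem chi_lt (hκ : ℵ₀ ≤ κ) (X : Set Ordinal.{u}) (j : Ordinal.{u}) : chi X j < κ.ord := by
  unfold chi; split
  · exact one_lt_ord hκ
  · exact (Cardinal.isSuccLimit_ord hκ).pos

theorem chi_ne {X Y : Set Ordinal.{u}} {j : Ordinal.{u}} (h : ¬(j ∈ X ↔ j ∈ Y)) :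
    chi X j ≠ chi Y j := by
  unfold chi
  by_cases h1 : j ∈ X <;> by_cases h2 : j ∈ Y
  · exact absurd (iff_of_true h1 h2) h
  · rw [if_pos h1, if_neg h2]; exact one_ne_zero
  · rw [if_neg h1, if_pos h2]; exact zero_ne_one
  · exact absurd (iff_of_false h1 h2) h

-- The canonical value function for the tree attached to `X`.
open Classical in
noncomputable def cval (X : Set Ordinal.{u}) (i : Ordinal.{u}) : Ordinal.{u} :=
  if ∃ j, cl j = i ∧ j ∈ X then 1 else 0

theorem cval_lt (hκ : ℵ₀ ≤ κ) (X : Set Ordinal.{u}) (i : Ordinal.{u}) : cval X i < κ.ord := by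
  unfold cval; split
  · exact one_lt_ord hκ
  · exact (Cardinal.isSuccLimit_ord hκ).pos

theorem cval_cl (X : Set Ordinal.{u}) (j : Ordinal.{u}) : cval X (cl j) = chi X j := by
  unfold cval chi
  by_cases h : j ∈ X
  · rw [if_pos ⟨j, rfl, h⟩, if_pos h]
  · rw [if_neg, if_neg h]
    rintro ⟨j', hj', hmem⟩
    exact h (cl_injective hj' ▸ hmem)

/-- Building a node from a value function. -/
noncomputable def mk' (κ : Cardinal.{u}) (β : Ordinal.{u}) (hβ : β < κ.ord)
    (f : Ordinal.{u} → Ordinal.{u}) (hf : ∀ i, i < β → f i < κ.ord) : KNode κ where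
  dom := β
  dom_lt := hβ
  val := fun i => if i < β then f i else 0
  val_lt := fun i hi => by
    show (if i < β then f i else 0) < κ.ord
    rw [if_pos hi]; exact hf i hi
  val_zero := fun i hi => if_neg hi

@[simp] theorem mk'_dom (κ : Cardinal.{u}) (β : Ordinal.{u}) (hβ : β < κ.ord)
    (f : Ordinal.{u} → Ordinal.{u}) hf : (mk' κ β hβ f hf).dom = β := rfl

theorem mk'_val (κ : Cardinal.{u}) (β : Ordinal.{u}) (hβ : β < κ.ord)
    (f : Ordinal.{u} → Ordinal.{u}) hf {i : Ordinal.{u}} (hi : i < β) :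
    (mk' κ β hβ f hf).val i = f i := if_pos hi

theorem restrict_dom (s : KNode κ) (β : Ordinal.{u}) (h : β ≤ s.dom) :
    (s.restrict β h).dom = β := rfl

theorem restrict_val (s : KNode κ) (β : Ordinal.{u}) (h : β ≤ s.dom) (i : Ordinal.{u}) :
    (s.restrict β h).val i = if i < β then s.val i else 0 := by
  simp only [KNode.restrict]

/-- The condition attached to the set `X`. -/
def tree (κ : Cardinal.{u}) (X : Set Ordinal.{u}) : Set (KNode κ) :=
  { s | ∀ j, cl j < s.dom → s.val (cl j) = chi X j }

/-- The canonical node of domain `β`. -/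
noncomputable def cnode (hκ : ℵ₀ ≤ κ) (X : Set Ordinal.{u}) (β : Ordinal.{u})
    (hβ : β < κ.ord) : KNode κ :=
  mk' κ β hβ (cval X) (fun i _ => cval_lt hκ X i)

theorem cnode_dom (hκ : ℵ₀ ≤ κ) (X : Set Ordinal.{u}) (β : Ordinal.{u}) (hβ : β < κ.ord) :
    (cnode hκ X β hβ).dom = β := rfl

theorem cnode_mem (hκ : ℵ₀ ≤ κ) (X : Set Ordinal.{u}) (β : Ordinal.{u}) (hβ : β < κ.ord) :
    cnode hκ X β hβ ∈ tree κ X := by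
  intro j hj
  rw [cnode_dom] at hj
  rw [cnode, mk'_val _ _ _ _ _ hj, cval_cl]

/-- The canonical extension of a node `s` to domain `β`. -/
noncomputable def extnode (hκ : ℵ₀ ≤ κ) (s : KNode κ) (X : Set Ordinal.{u}) (β : Ordinal.{u})
    (hβ : β < κ.ord) : KNode κ :=
  mk' κ β hβ (fun i => if i < s.dom then s.val i else cval X i)
    (fun i _ => by
      split
      · exact s.val_lt i ‹_›
      · exact cval_lt hκ X i)

theorem extnode_dom (hκ : ℵ₀ ≤ κ) (s : KNode κ) (X : Set Ordinal.{u}) (β : Ordinal.{u})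
    (hβ : β < κ.ord) : (extnode hκ s X β hβ).dom = β := rfl

theorem extnode_val (hκ : ℵ₀ ≤ κ) (s : KNode κ) (X : Set Ordinal.{u}) (β : Ordinal.{u})
    (hβ : β < κ.ord) {i : Ordinal.{u}} (hi : i < β) :
    (extnode hκ s X β hβ).val i = if i < s.dom then s.val i else cval X i :=
  mk'_val _ _ _ _ _ hi

theorem extnode_mem (hκ : ℵ₀ ≤ κ) {s : KNode κ} {X : Set Ordinal.{u}} (hs : s ∈ tree κ X)
    (β : Ordinal.{u}) (hβ : β < κ.ord) : extnode hκ s X β hβ ∈ tree κ X := by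
  intro j hj
  rw [extnode_dom] at hj
  rw [extnode_val hκ s X β hβ hj]
  split
  · exact hs j ‹_›
  · exact cval_cl X j

/-- The one-point extension `s⌢⟨a⟩`. -/
noncomputable def snoc (s : KNode κ) (a : Ordinal.{u}) (ha : a < κ.ord)
    (hd : s.dom + 1 < κ.ord) : KNode κ :=
  mk' κ (s.dom + 1) hd (fun i => if i = s.dom then a else s.val i)
    (fun i hi => by
      split
      · exact ha
      · exact s.val_lt i (lt_of_le_of_ne (lt_succ_iff'.1 hi) ‹_›))

theorem snoc_dom (s : KNode κ) (a : Ordinal.{u}) (ha : a < κ.ord) (hd : s.dom + 1 < κ.ord) :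
    (snoc s a ha hd).dom = s.dom + 1 := rfl

theorem snoc_val_last (s : KNode κ) (a : Ordinal.{u}) (ha : a < κ.ord)
    (hd : s.dom + 1 < κ.ord) : (snoc s a ha hd).val s.dom = a := by
  rw [snoc, mk'_val _ _ _ _ _ (lt_succ_self' s.dom), if_pos rfl]

theorem snoc_val_lt (s : KNode κ) (a : Ordinal.{u}) (ha : a < κ.ord) (hd : s.dom + 1 < κ.ord)
    {i : Ordinal.{u}} (hi : i < s.dom) : (snoc s a ha hd).val i = s.val i := by
  rw [snoc, mk'_val _ _ _ _ _ (hi.trans (lt_succ_self' s.dom)), if_neg hi.ne]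

theorem snoc_mem {s : KNode κ} {X : Set Ordinal.{u}} (hs : s ∈ tree κ X) {a : Ordinal.{u}}
    (ha : a < κ.ord) (hd : s.dom + 1 < κ.ord)
    (hcl : ∀ j, cl j = s.dom → a = chi X j) : snoc s a ha hd ∈ tree κ X := by
  intro j hj
  rw [snoc_dom, lt_succ_iff'] at hj
  rcases lt_or_eq_of_le hj with hj' | hj'
  · rw [snoc_val_lt s a ha hd hj']
    exact hs j hj'
  · rw [hj', snoc_val_last]
    exact hcl j hj'

theorem restrict_mem {s : KNode κ} {X : Set Ordinal.{u}} (hs : s ∈ tree κ X)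
    (β : Ordinal.{u}) (h : β ≤ s.dom) : s.restrict β h ∈ tree κ X := by
  intro j hj
  rw [restrict_dom] at hj
  rw [restrict_val, if_pos hj]
  exact hs j (lt_of_lt_of_le hj h)

theorem Iio_mem_cobounded (hκ : ℵ₀ ≤ κ) : Iio κ.ord ∈ cobounded κ := by
  refine ⟨subset_rfl, ?_⟩
  rw [Set.diff_self]
  have h0 : #(↥(∅ : Set Ordinal.{u})) = 0 := Cardinal.mk_emptyCollection _
  rw [h0]
  have hpos : Cardinal.lift.{u + 1} (0 : Cardinal.{u}) < Cardinal.lift.{u + 1} κ :=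
    Cardinal.lift_lt.2 (lt_of_lt_of_le Cardinal.aleph0_pos hκ)
  simpa using hpos

theorem succSet_eq_Iio (hκ : ℵ₀ ≤ κ) {X : Set Ordinal.{u}} {s : KNode κ}
    (hs : s ∈ tree κ X) (h : ∀ j, cl j ≠ s.dom) : succSet (tree κ X) s = Iio κ.ord := by
  ext a
  constructor
  · rintro ⟨t, ht, hdom, hagree, hval⟩
    rw [← hval]
    exact t.val_lt s.dom (hdom ▸ lt_succ_self' s.dom)
  · intro ha
    have hd : s.dom + 1 < κ.ord := succ_lt_ord hκ s.dom_lt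
    exact ⟨snoc s a ha hd, snoc_mem hs ha hd (fun j hj => absurd hj (h j)), rfl,
      fun i hi => snoc_val_lt s a ha hd hi, snoc_val_last s a ha hd⟩

theorem succSet_eq_singleton (hκ : ℵ₀ ≤ κ) {X : Set Ordinal.{u}} {s : KNode κ}
    (hs : s ∈ tree κ X) {j : Ordinal.{u}} (hj : cl j = s.dom) :
    succSet (tree κ X) s = {chi X j} := by
  ext a
  constructor
  · rintro ⟨t, ht, hdom, hagree, hval⟩
    have h1 : cl j < t.dom := by rw [hdom, hj]; exact lt_succ_self' s.dom
    have h2 := ht j h1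
    rw [hj] at h2
    rw [Set.mem_singleton_iff, ← hval, h2]
  · rintro rfl
    have hd : s.dom + 1 < κ.ord := succ_lt_ord hκ s.dom_lt
    have ha : chi X j < κ.ord := chi_lt hκ X j
    refine ⟨snoc s (chi X j) ha hd, snoc_mem hs ha hd ?_, rfl,
      fun i hi => snoc_val_lt s _ ha hd hi, snoc_val_last s _ ha hd⟩
    intro j' hj'
    have : j' = j := cl_injective (hj'.trans hj.symm)
    rw [this]

theorem tree_mem_PF (hκ : ℵ₀ ≤ κ) (X : Set Ordinal.{u}) : tree κ X ∈ PF κ (cobounded κ) := by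
  have hO := Cardinal.isSuccLimit_ord hκ
  refine ⟨⟨⟨⟨cnode hκ X 0 hO.pos, cnode_mem hκ X 0 hO.pos⟩,
      fun s hs β h => restrict_mem hs β h⟩, ?_, ?_, ?_⟩, ?_, ?_⟩
  · -- unbounded
    intro β hβ
    exact ⟨cnode hκ X β hβ, cnode_mem hκ X β hβ, le_rfl⟩
  · -- splitting extensions
    intro s hs
    set γ := ω * (s.dom / ω) + 2 * (s.dom % ω) with hγ
    have hγ2 : 2 * (s.dom % ω) < ω := tail2_lt s.dom
    have hγO : γ < κ.ord :=
      add_lt_ord hκ (lt_of_le_of_lt (Ordinal.mul_div_le s.dom ω) s.dom_lt)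
        (lt_of_lt_of_le hγ2 (omega0_le_ord hκ))
    have hsγ : s.dom ≤ γ := by
      conv_lhs => rw [← Ordinal.div_add_mod s.dom ω]
      apply add_le_add_right
      obtain ⟨n, hn⟩ := Ordinal.lt_omega0.1 (Ordinal.mod_lt s.dom Ordinal.omega0_ne_zero)
      rw [hn, two_mul_natCast, Nat.cast_le]
      omega
    have hγnc : ∀ j, cl j ≠ γ := by
      intro j hj
      have hmod : cl j % ω = γ % ω := by rw [hj]
      rw [cl_mod, hγ, Ordinal.mul_add_mod_self, Ordinal.mod_eq_of_lt hγ2] at hmod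
      obtain ⟨n, hn⟩ := Ordinal.lt_omega0.1 (Ordinal.mod_lt j Ordinal.omega0_ne_zero)
      obtain ⟨m, hm⟩ := Ordinal.lt_omega0.1 (Ordinal.mod_lt s.dom Ordinal.omega0_ne_zero)
      rw [hn, hm, two_mul_natCast, two_mul_natCast, ← Nat.cast_one, ← Nat.cast_add,
        Nat.cast_inj] at hmod
      omega
    have htmem : extnode hκ s X γ hγO ∈ tree κ X := extnode_mem hκ hs γ hγO
    refine ⟨extnode hκ s X γ hγO, htmem, hsγ, ?_, ?_⟩
    · intro i hi
      rw [extnode_val hκ s X γ hγO (lt_of_lt_of_le hi hsγ), if_pos hi]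
    · unfold IsSplitting
      rw [succSet_eq_Iio hκ htmem (fun j => by rw [extnode_dom]; exact hγnc j)]
      exact Iio_mem_cobounded hκ
  · -- closure at limits
    intro s hlim hres j hj
    have h1 : cl j + 1 < s.dom := by
      rw [Ordinal.add_one_eq_succ]; exact hlim.succ_lt hj
    have h2 := hres (cl j + 1) h1 j (lt_succ_self' (cl j))
    rwa [restrict_val, if_pos (lt_succ_self' (cl j))] at h2
  · -- (o)
    intro s hs
    by_cases h : ∃ j, cl j = s.dom
    · obtain ⟨j, hj⟩ := h
      exact Or.inl ⟨chi X j, succSet_eq_singleton hκ hs hj⟩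
    · push_neg at h
      refine Or.inr ?_
      rw [succSet_eq_Iio hκ hs h]
      exact Iio_mem_cobounded hκ
  · -- (i)
    intro s hs β hβ hlim _
    refine ⟨hβ, ?_⟩
    set a : Ordinal.{u} := if s.val β = 0 then 1 else 0 with ha
    have haO : a < κ.ord := by
      rw [ha]; split
      · exact one_lt_ord hκ
      · exact hO.pos
    have hresmem : s.restrict β hβ.le ∈ tree κ X := restrict_mem hs β hβ.le
    have hd : (s.restrict β hβ.le).dom + 1 < κ.ord := by
      rw [restrict_dom]; exact succ_lt_ord hκ (hβ.trans s.dom_lt)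
    have hsnoc : snoc (s.restrict β hβ.le) a haO hd ∈ tree κ X := by
      refine snoc_mem hresmem haO hd ?_
      intro j hj
      rw [restrict_dom] at hj
      exact absurd hj (cl_ne_limit hlim j)
    refine ⟨snoc (s.restrict β hβ.le) a haO hd, hsnoc, ?_, ?_, ?_⟩
    · rw [snoc_dom, restrict_dom]; exact lt_succ_self' β
    · intro j' hj'
      have hj'' : j' < (s.restrict β hβ.le).dom := by rw [restrict_dom]; exact hj'
      rw [snoc_val_lt _ a haO hd hj'', restrict_val, if_pos hj']
    · have hlast : (snoc (s.restrict β hβ.le) a haO hd).val β = a := by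
        have := snoc_val_last (s.restrict β hβ.le) a haO hd
        rwa [restrict_dom] at this
      rw [hlast, ha]
      split
      · rw [‹s.val β = 0›]; exact one_ne_zero
      · exact Ne.symm ‹s.val β ≠ 0›

theorem exists_diff {X Y : Set Ordinal.{u}} (h : X ≠ Y) : ∃ j, ¬(j ∈ X ↔ j ∈ Y) := by
  by_contra h'
  push_neg at h'
  exact h (Set.ext h')

theorem diff_lt_ord (hκ : ℵ₀ ≤ κ) {X Y : Set Ordinal.{u}} (hX : X ⊆ Iio κ.ord)
    (hY : Y ⊆ Iio κ.ord) {j : Ordinal.{u}} (hj : ¬(j ∈ X ↔ j ∈ Y)) : j < κ.ord := by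
  by_cases hjX : j ∈ X
  · exact hX hjX
  · exact hY ((not_iff.1 hj).1 hjX)

theorem tree_incompat (hκ : ℵ₀ ≤ κ) {X Y : Set Ordinal.{u}} (hX : X ⊆ Iio κ.ord)
    (hY : Y ⊆ Iio κ.ord) (hne : X ≠ Y) :
    Incompat κ (cobounded κ) (tree κ X) (tree κ Y) := by
  rintro ⟨r, hr, hrX, hrY⟩
  obtain ⟨j, hj⟩ := exists_diff hne
  have hjO : j < κ.ord := diff_lt_ord hκ hX hY hj
  have hclO : cl j < κ.ord := cl_lt_ord hκ hjO
  obtain ⟨s, hs, hdom⟩ := hr.1.2.1 (cl j + 1) (succ_lt_ord hκ hclO)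
  have hlt : cl j < s.dom := lt_of_lt_of_le (lt_succ_self' (cl j)) hdom
  have e1 : s.val (cl j) = chi X j := hrX hs j hlt
  have e2 : s.val (cl j) = chi Y j := hrY hs j hlt
  exact chi_ne hj (e1 ▸ e2)

theorem tree_injOn (hκ : ℵ₀ ≤ κ) :
    Set.InjOn (tree κ) (𝒫 (Iio (Cardinal.ord κ))) := by
  intro X hX Y hY h
  by_contra hne
  obtain ⟨j, hj⟩ := exists_diff hne
  have hjO : j < κ.ord := diff_lt_ord hκ hX hY hj
  have hclO : cl j < κ.ord := cl_lt_ord hκ hjO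
  have hcl1 : cl j + 1 < κ.ord := succ_lt_ord hκ hclO
  have h1 : (cnode hκ X (cl j + 1) hcl1).val (cl j) = chi X j := by
    rw [cnode, mk'_val _ _ _ _ _ (lt_succ_self' (cl j)), cval_cl]
  have h2 : cnode hκ X (cl j + 1) hcl1 ∈ tree κ Y :=
    h ▸ cnode_mem hκ X (cl j + 1) hcl1
  have h3 : (cnode hκ X (cl j + 1) hcl1).val (cl j) = chi Y j :=
    h2 j (lt_succ_self' (cl j))
  exact chi_ne hj (h1 ▸ h3)

end Stmt0Aux

/-- If `κ` is infinite with `κ^{<κ} = κ`, then there is an antichain of size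
`2^κ` in `P(F*_κ)`. -/
theorem stmt_0 (κ : Cardinal.{u}) (hκ : ℵ₀ ≤ κ) (hpow : κ ^< κ = κ) :
    ∃ A : Set (Set (KNode κ)), A ⊆ PF κ (cobounded κ) ∧
      A.Pairwise (Incompat κ (cobounded κ)) ∧
      #A = Cardinal.lift.{u + 1} (2 ^ κ) := by
  classical
  refine ⟨Stmt0Aux.tree κ '' 𝒫 (Iio κ.ord), ?_, ?_, ?_⟩
  · rintro p ⟨X, -, rfl⟩
    exact Stmt0Aux.tree_mem_PF hκ X
  · rintro p ⟨X, hX, rfl⟩ q ⟨Y, hY, rfl⟩ hne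
    exact Stmt0Aux.tree_incompat hκ hX hY (fun h => hne (by rw [h]))
  · rw [Cardinal.mk_image_eq_of_injOn _ _ (Stmt0Aux.tree_injOn hκ), Cardinal.mk_powerset,
      Ordinal.mk_Iio_ordinal, Cardinal.card_ord, Cardinal.lift_two_power]
end

section
/- Assume κ is an infinite cardinal with κ^{<κ} = κ. If P(F*_κ) satisfies the κ^{++}-chain condition, then 2^κ = κ^+. -/
open Cardinal Set

universe u

section Aux

open Ordinal

variable {κ : Cardinal.{u}}

/-- Coding coordinates: ordinals of the form `2*j+1`. -/
def Coding (i : Ordinal.{u}) : Prop := ∃ j, i = 2 * j + 1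

lemma lt_addone (o : Ordinal.{u}) : o < o + 1 := by
  rw [Ordinal.add_one_eq_succ]; exact Order.lt_succ o

lemma le_of_lt_addone {a b : Ordinal.{u}} (h : a < b + 1) : a ≤ b := by
  rwa [Ordinal.add_one_eq_succ, Order.lt_succ_iff] at h

lemma two_mul_lt {j d : Ordinal.{u}} (h : j < d) : 2 * j + 1 < 2 * d := by
  have h1 : j + 1 ≤ d := by rwa [Ordinal.add_one_eq_succ, Order.succ_le_iff]
  have h2 : 2 * (j + 1) ≤ 2 * d := mul_le_mul_right h1 2
  rw [mul_add, mul_one] at h2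
  refine lt_of_lt_of_le ?_ h2
  exact (add_lt_add_iff_left _).2 (by norm_num : (1:Ordinal) < 2)

lemma not_coding_two_mul (d : Ordinal.{u}) : ¬ Coding (2 * d) := by
  rintro ⟨j, hj⟩
  rcases le_or_gt d j with h | h
  · have : 2 * d ≤ 2 * j := mul_le_mul_right h 2
    have := lt_of_le_of_lt this (lt_addone _)
    rw [← hj] at this; exact lt_irrefl _ this
  · have := two_mul_lt h
    rw [← hj] at this; exact lt_irrefl _ this

lemma not_coding_limit {β : Ordinal.{u}} (h : Order.IsSuccLimit β) : ¬ Coding β := by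
  rintro ⟨j, hj⟩
  have h2 : 2 * j < β := by rw [hj]; exact lt_addone _
  have := h.succ_lt h2
  rw [← Ordinal.add_one_eq_succ, ← hj] at this
  exact lt_irrefl _ this

lemma coding_inj {j j' : Ordinal.{u}} (h : 2 * j + 1 = 2 * j' + 1) : j = j' := by
  rcases lt_trichotomy j j' with hl | he | hl
  · have := (two_mul_lt hl).trans (lt_addone _)
    rw [h] at this; exact absurd this (lt_irrefl _)
  · exact he
  · have := (two_mul_lt hl).trans (lt_addone _)
    rw [← h] at this; exact absurd this (lt_irrefl _)

end Aux
section Aux2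

open scoped Classical

variable {κ : Cardinal.{u}}

lemma ord_pos (hκ : ℵ₀ ≤ κ) : (0 : Ordinal.{u}) < κ.ord := by
  rw [Cardinal.lt_ord, Ordinal.card_zero]
  exact lt_of_lt_of_le Cardinal.aleph0_pos hκ

lemma one_lt_ord (hκ : ℵ₀ ≤ κ) : (1 : Ordinal.{u}) < κ.ord := by
  rw [Cardinal.lt_ord, Ordinal.card_one]
  exact lt_of_lt_of_le Cardinal.one_lt_aleph0 hκ

lemma two_lt_ord (hκ : ℵ₀ ≤ κ) : (2 : Ordinal.{u}) < κ.ord := by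
  rw [Cardinal.lt_ord]
  have h2 : ((2 : Ordinal.{u})).card = 2 := by
    rw [(by norm_num : (2 : Ordinal.{u}) = 1 + 1), Ordinal.card_add, Ordinal.card_one,
      one_add_one_eq_two]
  rw [h2]
  exact lt_of_lt_of_le (by exact_mod_cast Cardinal.nat_lt_aleph0 2) hκ

lemma ord_add_lt (hκ : ℵ₀ ≤ κ) {a b : Ordinal.{u}} (ha : a < κ.ord) (hb : b < κ.ord) :
    a + b < κ.ord := by
  rw [Cardinal.lt_ord] at ha hb ⊢
  rw [Ordinal.card_add]
  exact Cardinal.add_lt_of_lt hκ ha hb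

lemma ord_mul_lt (hκ : ℵ₀ ≤ κ) {a b : Ordinal.{u}} (ha : a < κ.ord) (hb : b < κ.ord) :
    a * b < κ.ord := by
  rw [Cardinal.lt_ord] at ha hb ⊢
  rw [Ordinal.card_mul]
  exact Cardinal.mul_lt_of_lt hκ ha hb

/-- The coded value of `f` at coordinate `i`. -/
noncomputable def codeF (κ : Cardinal.{u}) (f : ↥(Set.Iio κ.ord) → Bool) (i : Ordinal.{u}) :
    Ordinal.{u} :=
  if ∃ j : ↥(Set.Iio κ.ord), i = 2 * (j : Ordinal.{u}) + 1 ∧ f j = true then 1 else 0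

lemma codeF_lt_ord (hκ : ℵ₀ ≤ κ) (f : ↥(Set.Iio κ.ord) → Bool) (i : Ordinal.{u}) :
    codeF κ f i < κ.ord := by
  unfold codeF; split_ifs
  · exact one_lt_ord hκ
  · exact ord_pos hκ

lemma codeF_apply (f : ↥(Set.Iio κ.ord) → Bool) (j : ↥(Set.Iio κ.ord)) :
    codeF κ f (2 * (j : Ordinal.{u}) + 1) = if f j = true then 1 else 0 := by
  unfold codeF
  by_cases hf : f j = true
  · rw [if_pos ⟨j, rfl, hf⟩, if_pos hf]
  · rw [if_neg, if_neg hf]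
    rintro ⟨j', hj', hfj'⟩
    have : j' = j := Subtype.ext (coding_inj hj'.symm)
    rw [this] at hfj'; exact hf hfj'

/-- The tree coding `f`: values at coding coordinates are forced by `f`. -/
def ptree (κ : Cardinal.{u}) (f : ↥(Set.Iio κ.ord) → Bool) : Set (KNode κ) :=
  {s | ∀ i, i < s.dom → Coding i → s.val i = codeF κ f i}

/-- Node constructor from a raw value function. -/
noncomputable def mkN (β : Ordinal.{u}) (hβ : β < κ.ord) (v : Ordinal.{u} → Ordinal.{u})
    (hv : ∀ i, i < β → v i < κ.ord) : KNode κ where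
  dom := β
  dom_lt := hβ
  val := fun i => if i < β then v i else 0
  val_lt := fun i hi => by
    show (if i < β then v i else 0) < κ.ord
    rw [if_pos hi]; exact hv i hi
  val_zero := fun i hi => if_neg hi

@[simp] lemma mkN_dom (β : Ordinal.{u}) (hβ : β < κ.ord) (v hv) :
    (mkN (κ := κ) β hβ v hv).dom = β := rfl

@[simp] lemma mkN_val (β : Ordinal.{u}) (hβ : β < κ.ord) (v hv) (i : Ordinal.{u}) :
    (mkN (κ := κ) β hβ v hv).val i = if i < β then v i else 0 := rfl

lemma Iio_mem_cobounded (hκ : ℵ₀ ≤ κ) : Set.Iio κ.ord ∈ cobounded κ := by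
  refine ⟨subset_rfl, ?_⟩
  rw [Set.diff_self]
  rw [Cardinal.mk_emptyCollection]
  have : Cardinal.lift.{u+1} 0 < Cardinal.lift.{u+1} κ :=
    Cardinal.lift_lt.2 (lt_of_lt_of_le Cardinal.aleph0_pos hκ)
  simpa using this

end Aux2
section Aux3

variable {κ : Cardinal.{u}}

lemma succSet_full (hκ : ℵ₀ ≤ κ) (f : ↥(Set.Iio κ.ord) → Bool) {s : KNode κ}
    (hs : s ∈ ptree κ f) (hnc : ¬ Coding s.dom) :
    succSet (ptree κ f) s = Set.Iio κ.ord := by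
  ext a
  constructor
  · rintro ⟨t, _, hdom, _, hval⟩
    have : s.dom < t.dom := by rw [hdom]; exact lt_addone _
    rw [← hval]
    exact t.val_lt _ this
  · intro ha
    have hd1 : s.dom + 1 < κ.ord := ord_add_lt hκ s.dom_lt (one_lt_ord hκ)
    refine ⟨mkN (s.dom + 1) hd1 (fun i => if i < s.dom then s.val i else a)
      (fun i hi => by split_ifs with h; exacts [s.val_lt i h, ha]), ?_, rfl, ?_, ?_⟩
    · intro i hi hc
      rw [mkN_dom] at hi
      rw [mkN_val, if_pos hi]
      rcases lt_or_eq_of_le (le_of_lt_addone hi) with h | h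
      · rw [if_pos h]; exact hs i h hc
      · exact absurd (h ▸ hc) hnc
    · intro i hi
      rw [mkN_val, if_pos (hi.trans (lt_addone _)), if_pos hi]
    · rw [mkN_val, if_pos (lt_addone _), if_neg (lt_irrefl _)]

lemma succSet_singleton (hκ : ℵ₀ ≤ κ) (f : ↥(Set.Iio κ.ord) → Bool) {s : KNode κ}
    (hs : s ∈ ptree κ f) (hc : Coding s.dom) :
    succSet (ptree κ f) s = {codeF κ f s.dom} := by
  ext a
  constructor
  · rintro ⟨t, ht, hdom, _, hval⟩
    have hlt : s.dom < t.dom := by rw [hdom]; exact lt_addone _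
    have := ht s.dom hlt hc
    rw [hval] at this
    exact this
  · intro ha
    rw [Set.mem_singleton_iff] at ha
    have hd1 : s.dom + 1 < κ.ord := ord_add_lt hκ s.dom_lt (one_lt_ord hκ)
    refine ⟨mkN (s.dom + 1) hd1 (fun i => if i < s.dom then s.val i else codeF κ f s.dom)
      (fun i hi => by split_ifs with h; exacts [s.val_lt i h, codeF_lt_ord hκ f _]),
      ?_, rfl, ?_, ?_⟩
    · intro i hi hci
      rw [mkN_dom] at hi
      rw [mkN_val, if_pos hi]
      rcases lt_or_eq_of_le (le_of_lt_addone hi) with h | h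
      · rw [if_pos h]; exact hs i h hci
      · rw [if_neg (h ▸ lt_irrefl _), h]
    · intro i hi
      rw [mkN_val, if_pos (hi.trans (lt_addone _)), if_pos hi]
    · rw [mkN_val, if_pos (lt_addone _), if_neg (lt_irrefl _), ha]

lemma ptree_mem (hκ : ℵ₀ ≤ κ) (f : ↥(Set.Iio κ.ord) → Bool) :
    ptree κ f ∈ PF κ (cobounded κ) := by
  have hsub : IsSubtree (ptree κ f) := by
    constructor
    · exact ⟨mkN 0 (ord_pos hκ) (fun _ => 0) (fun i hi => absurd hi (not_lt_of_ge (zero_le (a := i)))),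
        fun i hi _ => absurd hi (not_lt_of_ge (zero_le (a := i)))⟩
    · intro s hsmem β hβ i hi hc
      have hiβ : i < β := hi
      show (if i < β then s.val i else 0) = _
      rw [if_pos hiβ]
      exact hsmem i (lt_of_lt_of_le hiβ hβ) hc
  refine ⟨⟨hsub, ?_, ?_, ?_⟩, ?_, ?_⟩
  · -- unbounded domains
    intro β hβ
    refine ⟨mkN β hβ (codeF κ f) (fun i _ => codeF_lt_ord hκ f i), ?_, le_refl _⟩
    intro i hi hc
    rw [mkN_dom] at hi
    rw [mkN_val, if_pos hi]
  · -- splitting extensions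
    intro s hs
    have hδ : 2 * s.dom < κ.ord := ord_mul_lt hκ (two_lt_ord hκ) s.dom_lt
    have hle : s.dom ≤ 2 * s.dom := by
      calc s.dom = 1 * s.dom := (one_mul _).symm
        _ ≤ 2 * s.dom := mul_le_mul_left (by norm_num) _
    set t := mkN (κ := κ) (2 * s.dom) hδ
      (fun i => if i < s.dom then s.val i else codeF κ f i)
      (fun i hi => by split_ifs with h; exacts [s.val_lt i h, codeF_lt_ord hκ f i]) with ht
    have htmem : t ∈ ptree κ f := by
      intro i hi hc
      rw [ht, mkN_dom] at hi
      rw [ht, mkN_val, if_pos hi]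
      by_cases h : i < s.dom
      · rw [if_pos h]; exact hs i h hc
      · rw [if_neg h]
    refine ⟨t, htmem, hle, ?_, ?_⟩
    · intro i hi
      rw [ht, mkN_val, if_pos (lt_of_lt_of_le hi hle), if_pos hi]
    · show succSet (ptree κ f) t ∈ cobounded κ
      have hnc : ¬ Coding t.dom := by
        rw [ht, mkN_dom]; exact not_coding_two_mul s.dom
      rw [succSet_full hκ f htmem hnc]
      exact Iio_mem_cobounded hκ
  · -- limit closure
    intro s hlim hres i hi hc
    have hβ : i + 1 < s.dom := by
      rw [Ordinal.add_one_eq_succ]; exact hlim.succ_lt hi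
    have := hres (i + 1) hβ i (lt_addone i) hc
    show s.val i = _
    rw [show (s.restrict (i+1) hβ.le).val i = s.val i from if_pos (lt_addone i)] at this
    exact this
  · -- (o)
    intro s hs
    by_cases hc : Coding s.dom
    · exact Or.inl ⟨codeF κ f s.dom, succSet_singleton hκ f hs hc⟩
    · right
      rw [succSet_full hκ f hs hc]
      exact Iio_mem_cobounded hκ
  · -- (i) deg closed
    intro s hs β hβ hlim _
    refine ⟨hβ, ?_⟩
    set a : Ordinal.{u} := if s.val β = 0 then 1 else 0 with ha
    have halt : a < κ.ord := by
      rw [ha]; split_ifs; exacts [one_lt_ord hκ, ord_pos hκ]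
    have hane : a ≠ s.val β := by
      rw [ha]; split_ifs with h
      · rw [h]; exact one_ne_zero
      · exact fun h0 => h h0.symm
    have hd1 : β + 1 < κ.ord := ord_add_lt hκ (hβ.trans s.dom_lt) (one_lt_ord hκ)
    refine ⟨mkN (β + 1) hd1 (fun i => if i < β then s.val i else a)
      (fun i hi => by split_ifs with h; exacts [s.val_lt i (h.trans hβ), halt]),
      ?_, lt_addone β, ?_, ?_⟩
    · intro i hi hci
      rw [mkN_dom] at hi
      rw [mkN_val, if_pos hi]
      rcases lt_or_eq_of_le (le_of_lt_addone hi) with h | h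
      · rw [if_pos h]; exact hs i (h.trans hβ) hci
      · exact absurd (h ▸ hci) (not_coding_limit hlim)
    · intro j hj
      rw [mkN_val, if_pos (hj.trans (lt_addone _)), if_pos hj]
    · rw [mkN_val, if_pos (lt_addone _), if_neg (lt_irrefl _)]
      exact hane

end Aux3
section Aux4

variable {κ : Cardinal.{u}}

lemma ptree_incompat (hκ : ℵ₀ ≤ κ) {f g : ↥(Set.Iio κ.ord) → Bool} (hfg : f ≠ g) :
    Incompat κ (cobounded κ) (ptree κ f) (ptree κ g) := by
  rintro ⟨r, hr, hrf, hrg⟩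
  obtain ⟨j, hj⟩ : ∃ j, f j ≠ g j := Function.ne_iff.1 hfg
  set i₀ : Ordinal.{u} := 2 * (j : Ordinal.{u}) + 1 with hi₀def
  have hi₀ : i₀ < κ.ord := ord_add_lt hκ (ord_mul_lt hκ (two_lt_ord hκ) j.2) (one_lt_ord hκ)
  obtain ⟨s, hsr, hdom⟩ := hr.1.2.1 (i₀ + 1) (ord_add_lt hκ hi₀ (one_lt_ord hκ))
  have hi₀lt : i₀ < s.dom := lt_of_lt_of_le (lt_addone i₀) hdom
  have h1 := hrf hsr i₀ hi₀lt ⟨j, rfl⟩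
  have h2 := hrg hsr i₀ hi₀lt ⟨j, rfl⟩
  rw [h1] at h2
  rw [hi₀def, codeF_apply f j, codeF_apply g j] at h2
  cases hf : f j <;> cases hg : g j
  · exact hj (hf.trans hg.symm)
  · rw [hf, hg] at h2; simp at h2
  · rw [hf, hg] at h2; simp at h2
  · exact hj (hf.trans hg.symm)

lemma ptree_injective (hκ : ℵ₀ ≤ κ) :
    Function.Injective (fun f : ↥(Set.Iio κ.ord) → Bool => ptree κ f) := by
  intro f g h
  by_contra hne
  have h' : ptree κ f = ptree κ g := h
  exact ptree_incompat hκ hne ⟨ptree κ f, ptree_mem hκ f, subset_rfl, h' ▸ subset_rfl⟩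

end Aux4
/-- If `κ` is infinite with `κ^{<κ} = κ` and `P(F*_κ)` satisfies the
`κ^{++}`-chain condition, then `2^κ = κ^+`. -/
theorem stmt_1 (κ : Cardinal.{u}) (hκ : ℵ₀ ≤ κ) (hpow : κ ^< κ = κ)
    (hcc : ∀ A : Set (Set (KNode κ)), A ⊆ PF κ (cobounded κ) →
      A.Pairwise (Incompat κ (cobounded κ)) →
      #A < Cardinal.lift.{u + 1} (Order.succ (Order.succ κ))) :
    2 ^ κ = Order.succ κ := by
  set A : Set (Set (KNode κ)) := Set.range (fun f : ↥(Set.Iio κ.ord) → Bool => ptree κ f)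
    with hA
  have hA1 : A ⊆ PF κ (cobounded κ) := by rintro _ ⟨f, rfl⟩; exact ptree_mem hκ f
  have hA2 : A.Pairwise (Incompat κ (cobounded κ)) := by
    rintro _ ⟨f, rfl⟩ _ ⟨g, rfl⟩ hne
    exact ptree_incompat hκ (fun h => hne (by rw [h]))
  have hX : #(↥(Set.Iio κ.ord)) = Cardinal.lift.{u + 1} κ := by
    rw [Ordinal.mk_Iio_ordinal, Cardinal.card_ord]
  have hcard : (#↥A) = Cardinal.lift.{u + 1} (2 ^ κ) := by
    rw [hA, Cardinal.mk_range_eq _ (ptree_injective hκ)]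
    rw [Cardinal.mk_arrow, Cardinal.mk_bool, Cardinal.lift_two, Cardinal.lift_uzero, hX,
      Cardinal.lift_power, Cardinal.lift_two]
  have hlt := hcc A hA1 hA2
  rw [hcard] at hlt
  have h2 : 2 ^ κ < Order.succ (Order.succ κ) := Cardinal.lift_lt.1 hlt
  exact le_antisymm (Order.lt_succ_iff.1 h2) (Order.succ_le_of_lt (Cardinal.cantor κ))
end

section
/- Assume κ is an infinite cardinal with κ^{<κ} = κ. For every function f : κ → κ, the set D_f is dense in P(F*_κ): for every condition p ∈ P(F*_κ) there exists a condition q ∈ D_f with q ≥ p (that is, q ⊆ p). -/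
open Cardinal Set

universe u

namespace Stmt2Aux

open Cardinal Set

variable {κ : Cardinal.{u}}

theorem lt_add_one_iff_le {a b : Ordinal.{u}} : a < b + 1 ↔ a ≤ b := by
  rw [Ordinal.add_one_eq_succ, Order.lt_succ_iff]

theorem knode_ext {s t : KNode κ} (hdom : s.dom = t.dom)
    (hval : ∀ i, i < s.dom → s.val i = t.val i) : s = t := by
  obtain ⟨d, hd, v, hv, hz⟩ := s
  obtain ⟨d', hd', v', hv', hz'⟩ := t
  simp only at hdom hval
  subst hdom
  have : v = v' := funext fun i => by
    by_cases h : i < d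
    · exact hval i h
    · rw [hz i h, hz' i h]
  subst this
  rfl

@[simp] theorem restrict_dom (s : KNode κ) (β : Ordinal.{u}) (h : β ≤ s.dom) :
    (s.restrict β h).dom = β := rfl

theorem restrict_val (s : KNode κ) {β : Ordinal.{u}} (h : β ≤ s.dom) {i : Ordinal.{u}}
    (hi : i < β) : (s.restrict β h).val i = s.val i := if_pos hi

theorem restrict_self (s : KNode κ) : s.restrict s.dom le_rfl = s :=
  knode_ext rfl fun i hi => restrict_val s le_rfl hi

/-- `t` extends `s`. -/
def Ext (s t : KNode κ) : Prop := s.dom ≤ t.dom ∧ ∀ i, i < s.dom → t.val i = s.val i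

theorem Ext.refl (s : KNode κ) : Ext s s := ⟨le_rfl, fun _ _ => rfl⟩

theorem Ext.trans {s t u : KNode κ} (h1 : Ext s t) (h2 : Ext t u) : Ext s u :=
  ⟨h1.1.trans h2.1, fun i hi => (h2.2 i (hi.trans_le h1.1)).trans (h1.2 i hi)⟩

theorem Ext.antisymm {s t : KNode κ} (h1 : Ext s t) (h2 : Ext t s) : s = t :=
  knode_ext (le_antisymm h1.1 h2.1) fun i hi => (h1.2 i hi).symm

theorem Ext.restrict (s : KNode κ) (β : Ordinal.{u}) (h : β ≤ s.dom) :
    Ext (s.restrict β h) s := ⟨h, fun i hi => (restrict_val s h hi).symm⟩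

/-- The one-point extension `s⌢⟨a⟩`. -/
noncomputable def ext1 (s : KNode κ) (hd : s.dom + 1 < κ.ord) {a : Ordinal.{u}}
    (ha : a < κ.ord) : KNode κ where
  dom := s.dom + 1
  dom_lt := hd
  val := fun i => if i < s.dom then s.val i else if i = s.dom then a else 0
  val_lt := fun i hi => by
    show (if i < s.dom then s.val i else if i = s.dom then a else 0) < κ.ord
    rcases lt_or_eq_of_le (lt_add_one_iff_le.1 hi) with h | h
    · rw [if_pos h]; exact s.val_lt i h
    · rw [if_neg (by simp [h]), if_pos h]; exact ha
  val_zero := fun i hi => by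
    show (if i < s.dom then s.val i else if i = s.dom then a else 0) = 0
    have h1 : ¬ i < s.dom := fun h => hi (h.trans (lt_add_one_iff_le.2 le_rfl))
    have h2 : i ≠ s.dom := fun h => hi (h ▸ lt_add_one_iff_le.2 le_rfl)
    rw [if_neg h1, if_neg h2]

@[simp] theorem ext1_dom (s : KNode κ) (hd : s.dom + 1 < κ.ord) {a : Ordinal.{u}}
    (ha : a < κ.ord) : (ext1 s hd ha).dom = s.dom + 1 := rfl

theorem ext1_val_lt (s : KNode κ) (hd : s.dom + 1 < κ.ord) {a : Ordinal.{u}}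
    (ha : a < κ.ord) {i : Ordinal.{u}} (hi : i < s.dom) :
    (ext1 s hd ha).val i = s.val i := if_pos hi

theorem ext1_val_dom (s : KNode κ) (hd : s.dom + 1 < κ.ord) {a : Ordinal.{u}}
    (ha : a < κ.ord) : (ext1 s hd ha).val s.dom = a := by
  show (if s.dom < s.dom then _ else if s.dom = s.dom then a else 0) = a
  rw [if_neg (lt_irrefl _), if_pos rfl]

theorem Ext.ext1 (s : KNode κ) (hd : s.dom + 1 < κ.ord) {a : Ordinal.{u}}
    (ha : a < κ.ord) : Ext s (ext1 s hd ha) :=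
  ⟨(lt_add_one_iff_le.2 le_rfl).le, fun i hi => ext1_val_lt s hd ha hi⟩

theorem succ_dom_lt (hκ : ℵ₀ ≤ κ) (s : KNode κ) : s.dom + 1 < κ.ord := by
  rw [Ordinal.add_one_eq_succ]
  exact (Cardinal.isSuccLimit_ord hκ).succ_lt s.dom_lt

theorem mem_of_succSet {p : Set (KNode κ)} {s : KNode κ} {a : Ordinal.{u}}
    (h : a ∈ succSet p s) : a < κ.ord := by
  obtain ⟨t, _, hdom, _, hval⟩ := h
  have : s.dom < t.dom := by rw [hdom]; exact lt_add_one_iff_le.2 le_rfl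
  exact hval ▸ t.val_lt s.dom this

theorem succSet_eq_ext1 {s t : KNode κ} {a : Ordinal.{u}}
    (hdom : t.dom = s.dom + 1) (hag : ∀ i, i < s.dom → t.val i = s.val i)
    (hval : t.val s.dom = a) (hd : s.dom + 1 < κ.ord) (ha : a < κ.ord) :
    t = ext1 s hd ha := by
  refine knode_ext (by rw [hdom, ext1_dom]) fun i hi => ?_
  rw [hdom] at hi
  rcases lt_or_eq_of_le (lt_add_one_iff_le.1 hi) with h | h
  · rw [hag i h, ext1_val_lt s hd ha h]
  · rw [h, hval, ext1_val_dom]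

theorem ext1_mem_of_succSet {p : Set (KNode κ)} {s : KNode κ} {a : Ordinal.{u}}
    (h : a ∈ succSet p s) (hd : s.dom + 1 < κ.ord) (ha : a < κ.ord) :
    ext1 s hd ha ∈ p := by
  obtain ⟨t, htp, hdom, hag, hval⟩ := h
  exact succSet_eq_ext1 hdom hag hval hd ha ▸ htp

theorem succSet_of_ext1_mem {p : Set (KNode κ)} {s : KNode κ} {a : Ordinal.{u}}
    (hd : s.dom + 1 < κ.ord) (ha : a < κ.ord) (h : ext1 s hd ha ∈ p) :
    a ∈ succSet p s :=
  ⟨ext1 s hd ha, h, rfl, fun i hi => ext1_val_lt s hd ha hi, ext1_val_dom s hd ha⟩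

theorem deg_mono {p q : Set (KNode κ)} (h : q ⊆ p) (s : KNode κ) :
    deg q s ⊆ deg p s := fun i ⟨hi, t, ht, hrest⟩ => ⟨hi, t, h ht, hrest⟩

theorem mem_deg_restrict {p : Set (KNode κ)} {s : KNode κ} {β : Ordinal.{u}}
    (h : β ≤ s.dom) {i : Ordinal.{u}} :
    i ∈ deg p (s.restrict β h) ↔ i ∈ deg p s ∧ i < β := by
  constructor
  · rintro ⟨hi, t, ht, hit, hag, hne⟩
    rw [restrict_dom] at hi
    refine ⟨⟨hi.trans_le h, t, ht, hit, fun j hj => ?_, ?_⟩, hi⟩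
    · rw [hag j hj, restrict_val s h (hj.trans hi)]
    · rwa [restrict_val s h hi] at hne
  · rintro ⟨⟨hi, t, ht, hit, hag, hne⟩, hiβ⟩
    refine ⟨by rwa [restrict_dom], t, ht, hit, fun j hj => ?_, ?_⟩
    · rw [hag j hj, restrict_val s h (hj.trans hiβ)]
    · rwa [restrict_val s h hiβ]

theorem mem_deg_ext1 {p : Set (KNode κ)} (hp : IsSubtree p) {s : KNode κ}
    (hd : s.dom + 1 < κ.ord) {a : Ordinal.{u}} (ha : a < κ.ord) {i : Ordinal.{u}} :
    i ∈ deg p (ext1 s hd ha) ↔ i ∈ deg p s ∨ (i = s.dom ∧ ∃ b ∈ succSet p s, b ≠ a) := by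
  constructor
  · rintro ⟨hi, t, ht, hit, hag, hne⟩
    rw [ext1_dom] at hi
    rcases lt_or_eq_of_le (lt_add_one_iff_le.1 hi) with hlt | heq
    · refine Or.inl ⟨hlt, t, ht, hit, fun j hj => ?_, ?_⟩
      · rw [hag j hj, ext1_val_lt s hd ha (hj.trans hlt)]
      · rwa [ext1_val_lt s hd ha hlt] at hne
    · subst heq
      have hle : s.dom + 1 ≤ t.dom := by
        rw [Ordinal.add_one_eq_succ]; exact Order.succ_le_of_lt hit
      refine Or.inr ⟨rfl, t.val s.dom, ⟨t.restrict (s.dom + 1) hle, hp.2 t ht _ hle, rfl,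
        fun j hj => ?_, restrict_val t hle (lt_add_one_iff_le.2 le_rfl)⟩, ?_⟩
      · rw [restrict_val t hle (hj.trans (lt_add_one_iff_le.2 le_rfl)), hag j hj,
          ext1_val_lt s hd ha hj]
      · exact fun e => hne (by rw [ext1_val_dom]; exact e)
  · rintro (⟨hi, t, ht, hit, hag, hne⟩ | ⟨heq, b, ⟨t, ht, hdom, hag, hval⟩, hba⟩)
    · refine ⟨by rw [ext1_dom]; exact hi.trans (lt_add_one_iff_le.2 le_rfl), t, ht, hit,
        fun j hj => ?_, ?_⟩
      · rw [hag j hj, ext1_val_lt s hd ha (hj.trans hi)]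
      · rwa [ext1_val_lt s hd ha hi]
    · subst heq
      refine ⟨by rw [ext1_dom]; exact lt_add_one_iff_le.2 le_rfl, t, ht,
        by rw [hdom]; exact lt_add_one_iff_le.2 le_rfl, fun j hj => ?_, ?_⟩
      · rw [hag j hj, ext1_val_lt s hd ha hj]
      · rw [hval, ext1_val_dom]; exact hba

theorem mk_Iio_ord : #(Iio κ.ord) = Cardinal.lift.{u + 1} κ := by
  rw [Ordinal.mk_Iio_ordinal, Cardinal.card_ord]

theorem mk_Iic_lt (hκ : ℵ₀ ≤ κ) {b : Ordinal.{u}} (hb : b < κ.ord) :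
    #(Iic b) < Cardinal.lift.{u + 1} κ := by
  have h1 : (Iic b : Set Ordinal.{u}) ⊆ Iio (b + 1) := fun x hx => lt_add_one_iff_le.2 hx
  have h2 : b + 1 < κ.ord := by
    rw [Ordinal.add_one_eq_succ]; exact (Cardinal.isSuccLimit_ord hκ).succ_lt hb
  calc #(Iic b) ≤ #(Iio (b + 1)) := mk_le_mk_of_subset h1
    _ = Cardinal.lift.{u + 1} (b + 1).card := Ordinal.mk_Iio_ordinal _
    _ < Cardinal.lift.{u + 1} κ := Cardinal.lift_lt.2 (Cardinal.lt_ord.1 h2)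

theorem cobounded_unbounded (hκ : ℵ₀ ≤ κ) {A : Set Ordinal.{u}} (hA : A ∈ cobounded κ)
    {b : Ordinal.{u}} (hb : b < κ.ord) : ∃ a ∈ A, b < a := by
  by_contra h
  push_neg at h
  have hsub : Iio κ.ord ⊆ Iic b ∪ (Iio κ.ord \ A) := fun x hx => by
    by_cases hxA : x ∈ A
    · exact Or.inl (h x hxA)
    · exact Or.inr ⟨hx, hxA⟩
  have h1 : Cardinal.lift.{u + 1} κ ≤ #(Iic b ∪ (Iio κ.ord \ A) : Set Ordinal.{u}) :=
    mk_Iio_ord ▸ mk_le_mk_of_subset hsub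
  have h2 := h1.trans (mk_union_le _ _)
  exact absurd h2 (not_le.2 (Cardinal.add_lt_of_lt (Cardinal.aleph0_le_lift.2 hκ)
    (mk_Iic_lt hκ hb) hA.2))

theorem cobounded_inter_Ioi (hκ : ℵ₀ ≤ κ) {A : Set Ordinal.{u}} (hA : A ∈ cobounded κ)
    {b : Ordinal.{u}} (hb : b < κ.ord) : A ∩ Ioi b ∈ cobounded κ := by
  refine ⟨fun x hx => hA.1 hx.1, ?_⟩
  have hsub : Iio κ.ord \ (A ∩ Ioi b) ⊆ (Iio κ.ord \ A) ∪ Iic b := fun x hx => by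
    by_cases hxA : x ∈ A
    · refine Or.inr ?_
      by_contra hxb
      exact hx.2 ⟨hxA, show b < x from not_le.1 fun hle => hxb hle⟩
    · exact Or.inl ⟨hx.1, hxA⟩
  calc #(Iio κ.ord \ (A ∩ Ioi b) : Set Ordinal.{u})
      ≤ #((Iio κ.ord \ A) ∪ Iic b : Set Ordinal.{u}) := mk_le_mk_of_subset hsub
    _ ≤ #(Iio κ.ord \ A : Set Ordinal.{u}) + #(Iic b) := mk_union_le _ _
    _ < Cardinal.lift.{u + 1} κ :=
      Cardinal.add_lt_of_lt (Cardinal.aleph0_le_lift.2 hκ) hA.2 (mk_Iic_lt hκ hb)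

theorem cobounded_ne (hκ : ℵ₀ ≤ κ) {A : Set Ordinal.{u}} (hA : A ∈ cobounded κ)
    (a : Ordinal.{u}) : ∃ b ∈ A, b ≠ a := by
  by_cases h : a < κ.ord
  · obtain ⟨b, hb, hab⟩ := cobounded_unbounded hκ hA h
    exact ⟨b, hb, hab.ne'⟩
  · obtain ⟨b, hb, _⟩ := cobounded_unbounded hκ hA (Cardinal.isSuccLimit_ord hκ).pos
    exact ⟨b, hb, fun e => h (e ▸ hA.1 hb)⟩

/-- The pruned tree. -/
def Q (p : Set (KNode κ)) (f : Ordinal.{u} → Ordinal.{u}) : Set (KNode κ) :=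
  {s | s ∈ p ∧ ∀ i ∈ deg p s, f i < s.val i}

variable {f : Ordinal.{u} → Ordinal.{u}} {p : Set (KNode κ)}

theorem Q_sub : Q p f ⊆ p := fun _ hs => hs.1

theorem Q_nonempty (hs : IsSubtree p) : (Q p f).Nonempty := by
  obtain ⟨s, hs₀⟩ := hs.1
  refine ⟨s.restrict 0 zero_le, hs.2 s hs₀ 0 _, fun i hi => ?_⟩
  exact absurd hi.1 (not_lt_of_ge (zero_le (a := i)))

theorem Q_subtree (hs : IsSubtree p) : IsSubtree (Q p f) :=
  ⟨Q_nonempty hs, fun s hs' β h => ⟨hs.2 s hs'.1 β h, fun i hi => by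
    obtain ⟨hdeg, hiβ⟩ := (mem_deg_restrict h).1 hi
    rw [restrict_val s h hiβ]
    exact hs'.2 i hdeg⟩⟩

theorem Q_closed (hp : p ∈ PF κ (cobounded κ)) :
    ∀ s : KNode κ, Order.IsSuccLimit s.dom →
      (∀ β (h : β < s.dom), s.restrict β h.le ∈ Q p f) → s ∈ Q p f := by
  intro s hlim hres
  have hsp : s ∈ p := hp.1.2.2.2 s hlim fun β h => (hres β h).1
  refine ⟨hsp, fun i hi => ?_⟩
  have hi1 : i + 1 < s.dom := by
    rw [Ordinal.add_one_eq_succ]; exact hlim.succ_lt hi.1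
  have h1 := hres (i + 1) hi1
  have h2 : i ∈ deg p (s.restrict (i + 1) hi1.le) :=
    (mem_deg_restrict _).2 ⟨hi, lt_add_one_iff_le.2 le_rfl⟩
  have h3 := h1.2 i h2
  rwa [restrict_val s hi1.le (lt_add_one_iff_le.2 le_rfl)] at h3

theorem succ_pair (hsub : IsSubtree p) {s : KNode κ} (hs : s ∈ p) {i : Ordinal.{u}}
    (hi : i ∈ deg p s) :
    s.val i ∈ succSet p (s.restrict i hi.1.le) ∧
      ∃ b ∈ succSet p (s.restrict i hi.1.le), b ≠ s.val i := by
  obtain ⟨hid, t, ht, hit, hag, hne⟩ := hi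
  have h1 : i + 1 ≤ s.dom := by
    rw [Ordinal.add_one_eq_succ]; exact Order.succ_le_of_lt hid
  have h2 : i + 1 ≤ t.dom := by
    rw [Ordinal.add_one_eq_succ]; exact Order.succ_le_of_lt hit
  constructor
  · refine ⟨s.restrict (i + 1) h1, hsub.2 s hs _ h1, rfl, fun j hj => ?_, ?_⟩
    · rw [restrict_val s h1 (hj.trans (lt_add_one_iff_le.2 le_rfl)),
        restrict_val s hid.le hj]
    · exact restrict_val s h1 (lt_add_one_iff_le.2 le_rfl)
  · refine ⟨t.val i, ⟨t.restrict (i + 1) h2, hsub.2 t ht _ h2, rfl, fun j hj => ?_, ?_⟩, hne⟩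
    · rw [restrict_val t h2 (hj.trans (lt_add_one_iff_le.2 le_rfl)), hag j hj,
        restrict_val s hid.le hj]
    · exact restrict_val t h2 (lt_add_one_iff_le.2 le_rfl)

theorem restrict_splitting (hp : p ∈ PF κ (cobounded κ)) {s : KNode κ} (hs : s ∈ p)
    {i : Ordinal.{u}} (hi : i ∈ deg p s) :
    succSet p (s.restrict i hi.1.le) ∈ cobounded κ := by
  obtain ⟨hmem, b, hb, hbne⟩ := succ_pair hp.1.1 hs hi
  rcases hp.2.1 _ (hp.1.1.2 s hs i hi.1.le) with ⟨a, hA⟩ | h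
  · rw [hA] at hmem hb
    exact absurd (hb.trans hmem.symm) hbne
  · exact h

theorem deg_Q_eq (hκ : ℵ₀ ≤ κ) (hf : ∀ i, i < κ.ord → f i < κ.ord)
    (hp : p ∈ PF κ (cobounded κ)) {s : KNode κ} (hs : s ∈ Q p f) :
    deg (Q p f) s = deg p s := by
  refine subset_antisymm (deg_mono Q_sub s) fun i hi => ?_
  have hid : i < s.dom := hi.1
  have hile : i ≤ s.dom := hid.le
  have hsplit : succSet p (s.restrict i hile) ∈ cobounded κ := restrict_splitting hp hs.1 hi
  have hfi : f i < κ.ord := hf i (hid.trans s.dom_lt)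
  have hvi : s.val i < κ.ord := s.val_lt i hid
  obtain ⟨a, haA, hagt⟩ := cobounded_unbounded hκ hsplit (max_lt hfi hvi)
  have ha : a < κ.ord := mem_of_succSet haA
  have hd : (s.restrict i hile).dom + 1 < κ.ord := succ_dom_lt hκ _
  have hw : ext1 (s.restrict i hile) hd ha ∈ p := ext1_mem_of_succSet haA hd ha
  have hwQ : ext1 (s.restrict i hile) hd ha ∈ Q p f := by
    refine ⟨hw, fun j hj => ?_⟩
    rcases (mem_deg_ext1 hp.1.1 hd ha).1 hj with hj' | ⟨hjeq, _⟩
    · obtain ⟨hjdeg, hji⟩ := (mem_deg_restrict hile).1 hj'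
      rw [ext1_val_lt (s.restrict i hile) hd ha hji, restrict_val s hile hji]
      exact hs.2 j hjdeg
    · rw [hjeq, ext1_val_dom]
      exact (le_max_left _ _).trans_lt hagt
  refine ⟨hid, ext1 (s.restrict i hile) hd ha, hwQ, ?_, fun j hj => ?_, ?_⟩
  · rw [ext1_dom]
    exact lt_add_one_iff_le.2 le_rfl
  · rw [ext1_val_lt (s.restrict i hile) hd ha hj, restrict_val s hile hj]
  · rw [show (ext1 (s.restrict i hile) hd ha).val i = a from ext1_val_dom _ hd ha]
    exact ((le_max_right _ _).trans_lt hagt).ne'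

theorem mem_succSet_Q_iff (hκ : ℵ₀ ≤ κ) (hp : p ∈ PF κ (cobounded κ)) {s : KNode κ}
    (hs : s ∈ Q p f) {a : Ordinal.{u}} :
    a ∈ succSet (Q p f) s ↔
      a ∈ succSet p s ∧ ((∃ b ∈ succSet p s, b ≠ a) → f s.dom < a) := by
  constructor
  · intro h
    have ha := mem_of_succSet h
    have hd := succ_dom_lt hκ s
    have hQ : ext1 s hd ha ∈ Q p f := ext1_mem_of_succSet h hd ha
    refine ⟨succSet_of_ext1_mem hd ha hQ.1, fun ⟨b, hb, hba⟩ => ?_⟩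
    have h1 : s.dom ∈ deg p (ext1 s hd ha) :=
      (mem_deg_ext1 hp.1.1 hd ha).2 (Or.inr ⟨rfl, b, hb, hba⟩)
    have h2 := hQ.2 s.dom h1
    rwa [ext1_val_dom] at h2
  · rintro ⟨hA, himp⟩
    have ha := mem_of_succSet hA
    have hd := succ_dom_lt hκ s
    have hmem : ext1 s hd ha ∈ p := ext1_mem_of_succSet hA hd ha
    refine succSet_of_ext1_mem hd ha ⟨hmem, fun j hj => ?_⟩
    rcases (mem_deg_ext1 hp.1.1 hd ha).1 hj with hj' | ⟨hjeq, hex⟩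
    · rw [ext1_val_lt s hd ha hj'.1]
      exact hs.2 j hj'
    · rw [hjeq, ext1_val_dom]
      exact himp hex

theorem succSet_Q_of_cobounded (hκ : ℵ₀ ≤ κ) (hp : p ∈ PF κ (cobounded κ)) {s : KNode κ}
    (hs : s ∈ Q p f) (hA : succSet p s ∈ cobounded κ) :
    succSet (Q p f) s = succSet p s ∩ Ioi (f s.dom) := by
  ext a
  rw [mem_succSet_Q_iff hκ hp hs]
  constructor
  · rintro ⟨h1, h2⟩
    exact ⟨h1, h2 (cobounded_ne hκ hA a)⟩
  · rintro ⟨h1, h2⟩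
    exact ⟨h1, fun _ => h2⟩

theorem succSet_Q (hκ : ℵ₀ ≤ κ) (hf : ∀ i, i < κ.ord → f i < κ.ord)
    (hp : p ∈ PF κ (cobounded κ)) {s : KNode κ} (hs : s ∈ Q p f) :
    (∃ a, succSet (Q p f) s = {a}) ∨ succSet (Q p f) s ∈ cobounded κ := by
  rcases hp.2.1 s hs.1 with ⟨a, hA⟩ | hA
  · left
    refine ⟨a, Set.eq_singleton_iff_unique_mem.2 ⟨?_, ?_⟩⟩
    · refine (mem_succSet_Q_iff hκ hp hs).2 ⟨by rw [hA]; rfl, ?_⟩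
      rintro ⟨b, hb, hba⟩
      rw [hA] at hb
      exact absurd hb hba
    · intro b hb
      have h1 := ((mem_succSet_Q_iff hκ hp hs).1 hb).1
      rwa [hA] at h1
  · right
    rw [succSet_Q_of_cobounded hκ hp hs hA]
    exact cobounded_inter_Ioi hκ hA (hf s.dom s.dom_lt)

theorem Q_splitting (hκ : ℵ₀ ≤ κ) (hf : ∀ i, i < κ.ord → f i < κ.ord)
    (hp : p ∈ PF κ (cobounded κ)) {s : KNode κ} (hs : s ∈ Q p f) :
    ∃ t ∈ Q p f, Ext s t ∧ succSet (Q p f) t ∈ cobounded κ := by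
  set D : Set Ordinal.{u} := {d | ∃ t ∈ p, Ext s t ∧ succSet p t ∈ cobounded κ ∧ t.dom = d}
    with hD_def
  have hD : D.Nonempty := by
    obtain ⟨t, ht, hd, hag, hsp⟩ := hp.1.2.2.1 s hs.1
    exact ⟨t.dom, t, ht, ⟨hd, hag⟩, hsp, rfl⟩
  obtain ⟨t, ht, hext, hsp, hdom⟩ := csInf_mem hD
  have htQ : t ∈ Q p f := by
    refine ⟨ht, fun i hi => ?_⟩
    by_cases hcase : i < s.dom
    · have hideg : i ∈ deg p s := by
        obtain ⟨hit, t', ht', hit', hag', hne'⟩ := hi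
        refine ⟨hcase, t', ht', hit', fun j hj => ?_, ?_⟩
        · rw [hag' j hj, hext.2 j (hj.trans hcase)]
        · rw [hext.2 i hcase] at hne'
          exact hne'
      rw [hext.2 i hcase]
      exact hs.2 i hideg
    · exfalso
      have hile : i ≤ t.dom := hi.1.le
      have hsplit' : succSet p (t.restrict i hile) ∈ cobounded κ :=
        restrict_splitting hp ht hi
      have hiD : i ∈ D := ⟨t.restrict i hile, hp.1.1.2 t ht i hile,
        ⟨not_lt.1 hcase, fun j hj => by
          rw [restrict_val t hile (hj.trans_le (not_lt.1 hcase)), hext.2 j hj]⟩,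
        hsplit', rfl⟩
      exact absurd hi.1 (not_lt.2 (hdom ▸ csInf_le' hiD))
  refine ⟨t, htQ, hext, ?_⟩
  rw [succSet_Q_of_cobounded hκ hp htQ hsp]
  exact cobounded_inter_Ioi hκ hsp (hf t.dom t.dom_lt)

theorem Q_step (hκ : ℵ₀ ≤ κ) (hf : ∀ i, i < κ.ord → f i < κ.ord)
    (hp : p ∈ PF κ (cobounded κ)) {s : KNode κ} (hs : s ∈ Q p f) :
    ∃ t ∈ Q p f, Ext s t ∧ s.dom < t.dom := by
  obtain ⟨t, ht, hext, hsp⟩ := Q_splitting hκ hf hp hs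
  obtain ⟨a, ha, -⟩ := cobounded_unbounded hκ hsp (Cardinal.isSuccLimit_ord hκ).pos
  have haord := mem_of_succSet ha
  have hd := succ_dom_lt hκ t
  have hmem : ext1 t hd haord ∈ Q p f := ext1_mem_of_succSet ha hd haord
  refine ⟨ext1 t hd haord, hmem, hext.trans (Ext.ext1 t hd haord), ?_⟩
  rw [ext1_dom]
  exact hext.1.trans_lt (lt_add_one_iff_le.2 le_rfl)

theorem Q_unbounded (hκ : ℵ₀ ≤ κ) (hf : ∀ i, i < κ.ord → f i < κ.ord)
    (hp : p ∈ PF κ (cobounded κ)) {β : Ordinal.{u}} (hβ : β < κ.ord) :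
    ∃ s ∈ Q p f, β ≤ s.dom := by
  classical
  let r : ↥(Q p f) → ↥(Q p f) → Prop := fun s t => Ext s.1 t.1
  obtain ⟨M, hM, -⟩ := (IsChain.empty (r := r)).exists_maxChain
  have hMne : M.Nonempty := by
    by_contra hemp
    rw [Set.not_nonempty_iff_eq_empty] at hemp
    obtain ⟨s0, hs0⟩ := Q_nonempty (hp.1.1 : IsSubtree p) (f := f)
    have h1 : IsChain r {(⟨s0, hs0⟩ : ↥(Q p f))} :=
      Set.Subsingleton.isChain Set.subsingleton_singleton
    have h2 := hM.2 h1 (hemp ▸ Set.empty_subset _)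
    rw [hemp] at h2
    exact absurd h2.symm (Set.singleton_ne_empty _)
  suffices h : ∃ s ∈ M, β ≤ (s : ↥(Q p f)).1.dom by
    obtain ⟨s, _, hsd⟩ := h
    exact ⟨s.1, s.2, hsd⟩
  by_contra hcon
  push_neg at hcon
  set S : Set Ordinal.{u} := {d | ∃ s ∈ M, ((s : ↥(Q p f)) : KNode κ).dom = d} with hS_def
  have hSne : S.Nonempty := by
    obtain ⟨s, hs⟩ := hMne
    exact ⟨_, s, hs, rfl⟩
  have hSub : ∀ d ∈ S, d ≤ β := by
    rintro d ⟨s, hsM, rfl⟩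
    exact (hcon s hsM).le
  have hSbdd : BddAbove S := ⟨β, hSub⟩
  set δ : Ordinal.{u} := sSup S with hδ_def
  have hδβ : δ ≤ β := csSup_le hSne hSub
  have hδord : δ < κ.ord := hδβ.trans_lt hβ
  have hdom_le : ∀ s ∈ M, ((s : ↥(Q p f)) : KNode κ).dom ≤ δ := fun s hs =>
    le_csSup hSbdd ⟨s, hs, rfl⟩
  by_cases hatt : δ ∈ S
  · -- the sup is attained: extend the top node
    obtain ⟨s, hsM, hsd⟩ := hatt
    have htop : ∀ c ∈ M, Ext (c : ↥(Q p f)).1 s.1 := by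
      intro c hcM
      by_cases hcs : c = s
      · rw [hcs]; exact Ext.refl _
      · rcases hM.1 hcM hsM hcs with hr | hr
        · exact hr
        · have h1 : s.1.dom ≤ c.1.dom := hr.1
          have h2 : c.1.dom ≤ s.1.dom := hsd ▸ hdom_le c hcM
          exact ⟨h2, fun i hi => (hr.2 i (hi.trans_le h2)).symm⟩
    obtain ⟨t, htQ, hext, hlt⟩ := Q_step hκ hf hp s.2
    have hchain : IsChain r (insert (⟨t, htQ⟩ : ↥(Q p f)) M) :=
      hM.1.insert fun b hb _ => Or.inr ((htop b hb).trans hext)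
    have heq := hM.2 hchain (Set.subset_insert _ _)
    have htM : (⟨t, htQ⟩ : ↥(Q p f)) ∈ M := heq ▸ Set.mem_insert _ _
    have := hdom_le _ htM
    simp only at this
    exact absurd (hsd ▸ hlt) (not_lt.2 this)
  · -- the sup is a limit of domains: take the union node
    have hlt_δ : ∀ s ∈ M, ((s : ↥(Q p f)) : KNode κ).dom < δ := fun s hs =>
      lt_of_le_of_ne (hdom_le s hs) fun h => hatt ⟨s, hs, h⟩
    have hex : ∀ i, i < δ → ∃ s : ↥(Q p f), s ∈ M ∧ i < (s : KNode κ).dom := by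
      intro i hi
      obtain ⟨d, ⟨s, hsM, rfl⟩, hd⟩ := exists_lt_of_lt_csSup hSne hi
      exact ⟨s, hsM, hd⟩
    have hδ0 : δ ≠ 0 := by
      obtain ⟨s, hs⟩ := hMne
      exact fun h => absurd (h ▸ hlt_δ s hs) (not_lt_of_ge zero_le)
    have hlim : Order.IsSuccLimit δ := by
      refine Ordinal.isSuccLimit_iff.2 ⟨hδ0, Order.isSuccPrelimit_of_succ_lt fun a ha => ?_⟩
      obtain ⟨d, ⟨s, hsM, rfl⟩, hd⟩ := exists_lt_of_lt_csSup hSne ha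
      rw [← Ordinal.add_one_eq_succ]
      have h1 : a + 1 ≤ (s : KNode κ).dom := by
        rw [Ordinal.add_one_eq_succ]; exact Order.succ_le_of_lt hd
      exact h1.trans_lt (hlt_δ s hsM)
    let u : KNode κ :=
      { dom := δ
        dom_lt := hδord
        val := fun i => if h : i < δ then ((hex i h).choose : KNode κ).val i else 0
        val_lt := fun i hi => by
          show (if h : i < δ then ((hex i h).choose : KNode κ).val i else 0) < κ.ord
          rw [dif_pos hi]
          exact ((hex i hi).choose : KNode κ).val_lt i (hex i hi).choose_spec.2
        val_zero := fun i hi => by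
          show (if h : i < δ then ((hex i h).choose : KNode κ).val i else 0) = 0
          exact dif_neg hi }
    have hcoh : ∀ s ∈ M, ∀ i, i < ((s : ↥(Q p f)) : KNode κ).dom →
        u.val i = ((s : ↥(Q p f)) : KNode κ).val i := by
      intro s hsM i hi
      have hiδ : i < δ := hi.trans_le (hdom_le s hsM)
      show (if h : i < δ then ((hex i h).choose : KNode κ).val i else 0) = _
      rw [dif_pos hiδ]
      set t := (hex i hiδ).choose with ht_def
      have htM : t ∈ M := (hex i hiδ).choose_spec.1
      have hit : i < (t : KNode κ).dom := (hex i hiδ).choose_spec.2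
      by_cases hst : s = t
      · rw [hst]
      · rcases hM.1 hsM htM hst with hr | hr
        · exact hr.2 i hi
        · exact (hr.2 i hit).symm
    have hudom : u.dom = δ := rfl
    have hres : ∀ γ (h : γ < u.dom), u.restrict γ h.le ∈ Q p f := by
      intro γ hγ
      obtain ⟨s, hsM, hγs⟩ := hex γ hγ
      have heq : u.restrict γ hγ.le = (s : KNode κ).restrict γ hγs.le := by
        refine knode_ext rfl fun i hi => ?_
        rw [restrict_dom] at hi
        rw [restrict_val u hγ.le hi, restrict_val _ hγs.le hi]
        exact hcoh s hsM i (hi.trans hγs)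
      rw [heq]
      exact (Q_subtree hp.1.1).2 _ s.2 γ hγs.le
    have huQ : u ∈ Q p f := Q_closed hp u hlim hres
    have hchain : IsChain r (insert (⟨u, huQ⟩ : ↥(Q p f)) M) :=
      hM.1.insert fun b hb _ =>
        Or.inr ⟨(hlt_δ b hb).le, fun i hi => hcoh b hb i hi⟩
    have heq := hM.2 hchain (Set.subset_insert _ _)
    have huM : (⟨u, huQ⟩ : ↥(Q p f)) ∈ M := heq ▸ Set.mem_insert _ _
    exact absurd (hlt_δ _ huM) (lt_irrefl δ)

end Stmt2Aux

/-- For every `f : κ → κ`, the set `D_f` is dense in `P(F*_κ)`. -/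
theorem stmt_2 (κ : Cardinal.{u}) (hκ : ℵ₀ ≤ κ) (hpow : κ ^< κ = κ)
    (f : Ordinal.{u} → Ordinal.{u}) (hf : ∀ i, i < κ.ord → f i < κ.ord) :
    ∀ p ∈ PF κ (cobounded κ), ∃ q ∈ Dset κ f, q ⊆ p := by
  intro p hp
  refine ⟨Stmt2Aux.Q p f,
    ⟨⟨⟨Stmt2Aux.Q_subtree hp.1.1,
        fun β hβ => Stmt2Aux.Q_unbounded hκ hf hp hβ,
        fun s hs => ?_,
        Stmt2Aux.Q_closed hp⟩,
      fun s hs => Stmt2Aux.succSet_Q hκ hf hp hs,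
      fun s hs => ?_⟩,
     fun s hs i hi => hs.2 i (Stmt2Aux.deg_mono Stmt2Aux.Q_sub s hi)⟩,
    Stmt2Aux.Q_sub⟩
  · obtain ⟨t, htQ, hext, hsp⟩ := Stmt2Aux.Q_splitting hκ hf hp hs
    exact ⟨t, htQ, hext.1, hext.2, hsp⟩
  · rw [Stmt2Aux.deg_Q_eq hκ hf hp hs]
    exact hp.2.2 s hs.1
end

section
/- Assume κ is a regular uncountable cardinal with κ^{<κ} = κ. Let f : κ → κ, let q ∈ D_f, and let g ∈ [q] be a κ-branch of q. Then the set {i < κ : f(i) < g(i)} contains a club of κ. -/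
open Cardinal Set

universe u

-- auxiliary lemma: a cobounded set contains an element different from any given x
lemma cobounded_ne {κ : Cardinal.{u}} (h : ℵ₀ ≤ κ) {A : Set Ordinal.{u}}
    (hA : A ∈ cobounded κ) (x : Ordinal.{u}) : ∃ a ∈ A, a ≠ x := by
  by_contra hcon
  push_neg at hcon
  have hsub : Set.Iio κ.ord \ {x} ⊆ Set.Iio κ.ord \ A := fun a ⟨ha1, ha2⟩ =>
    ⟨ha1, fun haA => ha2 (hcon a haA)⟩
  have h1 : #(↥(Set.Iio κ.ord \ {x})) < Cardinal.lift.{u+1} κ :=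
    lt_of_le_of_lt (Cardinal.mk_le_mk_of_subset hsub) hA.2
  have h2 : Cardinal.lift.{u+1} κ ≤ #(↥(Set.Iio κ.ord \ {x})) + 1 := by
    have : (Set.Iio κ.ord : Set Ordinal.{u}) ⊆ (Set.Iio κ.ord \ {x}) ∪ {x} := by
      intro a ha
      by_cases hax : a = x
      · exact Or.inr hax
      · exact Or.inl ⟨ha, hax⟩
    calc Cardinal.lift.{u+1} κ = #(↥(Set.Iio κ.ord)) := by
          rw [Ordinal.mk_Iio_ordinal, Cardinal.card_ord]
      _ ≤ #(↥((Set.Iio κ.ord \ {x}) ∪ ({x} : Set Ordinal.{u}))) :=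
          Cardinal.mk_le_mk_of_subset this
      _ ≤ #(↥(Set.Iio κ.ord \ {x})) + #(↥({x} : Set Ordinal.{u})) := Cardinal.mk_union_le _ _
      _ = #(↥(Set.Iio κ.ord \ {x})) + 1 := by rw [Cardinal.mk_singleton]
  have hinf : ℵ₀ ≤ Cardinal.lift.{u+1} κ := by
    simpa using Cardinal.lift_le.{u+1}.mpr h
  have : #(↥(Set.Iio κ.ord \ {x})) + 1 < Cardinal.lift.{u+1} κ :=
    Cardinal.add_lt_of_lt hinf h1 (lt_of_lt_of_le Cardinal.one_lt_aleph0 hinf)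
  exact absurd (lt_of_le_of_lt h2 this) (lt_irrefl _)

/-- If `κ` is regular uncountable with `κ^{<κ} = κ`, `f : κ → κ`, `q ∈ D_f`
and `g` is a κ-branch of `q`, then `{i < κ : f(i) < g(i)}` contains a club of `κ`. -/
theorem stmt_5 (κ : Cardinal.{u}) (hreg : κ.IsRegular) (huncount : ℵ₀ < κ)
    (hpow : κ ^< κ = κ)
    (f : Ordinal.{u} → Ordinal.{u}) (hf : ∀ i, i < κ.ord → f i < κ.ord)
    (q : Set (KNode κ)) (hq : q ∈ Dset κ f)
    (g : Ordinal.{u} → Ordinal.{u}) (hg : IsBranch q g) :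
    ∃ C : Set Ordinal.{u}, IsClubBelow C κ.ord ∧ C ⊆ {i | f i < g i} := by
  obtain ⟨⟨⟨hsub, hunb, hsplit, hlim⟩, ho, hcl⟩, hD⟩ := hq
  have hκ : ℵ₀ ≤ κ := hreg.aleph0_le
  have hord : Order.IsSuccLimit κ.ord := Cardinal.isSuccLimit_ord hκ
  have hsucc : ∀ a : Ordinal.{u}, a < κ.ord → a + 1 < κ.ord := by
    intro a ha; rw [Ordinal.add_one_eq_succ]; exact hord.succ_lt ha
  -- The club: levels of the splitting history along the branch g
  refine ⟨{i | ∃ s ∈ q, (∀ j, j < s.dom → s.val j = g j) ∧ i ∈ deg q s}, ⟨?_, ?_, ?_⟩, ?_⟩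
  · -- C ⊆ Iio κ.ord
    rintro i ⟨s, hs, hgs, hideg⟩
    exact lt_trans hideg.1 s.dom_lt
  · -- unbounded
    intro β hβ
    have hβ1 : β + 1 < κ.ord := hsucc β hβ
    obtain ⟨s, hsq, hsdom, hsval⟩ := hg (β + 1) hβ1
    obtain ⟨t, htq, hst, htval, htspl⟩ := hsplit s hsq
    by_cases hcase : ∃ j, j < t.dom ∧ t.val j ≠ g j
    · -- t deviates from g; take least deviation point j
      set S : Set Ordinal.{u} := {j | j < t.dom ∧ t.val j ≠ g j} with hS
      have hne : S.Nonempty := hcase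
      have hjS : sInf S ∈ S := csInf_mem hne
      set j := sInf S with hj
      have hjd : j < t.dom := hjS.1
      have hjlt : j < κ.ord := lt_trans hjd t.dom_lt
      -- j ≥ β + 1
      have hjge : β < j := by
        by_contra hlt
        push_neg at hlt
        have hjβ : j < β + 1 := lt_of_le_of_lt hlt (lt_add_one β)
        have hjsd : j < s.dom := hsdom ▸ hjβ
        have : t.val j = g j := by
          rw [htval j hjsd, hsval j (hsdom ▸ hjsd)]
        exact hjS.2 this
      obtain ⟨u, huq, hudom, huval⟩ := hg (j + 1) (hsucc j hjlt)
      refine ⟨j, ⟨u, huq, ?_, ?_⟩, hjge⟩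
      · intro k hk; rw [hudom] at hk; exact huval k hk
      · refine ⟨by rw [hudom]; exact lt_add_one j, t, htq, hjd, ?_, ?_⟩
        · intro k hk
          have hkS : k ∉ S := notMem_of_lt_csInf' hk
          have : t.val k = g k := by
            by_contra hc; exact hkS ⟨lt_trans hk hjd, hc⟩
          rw [this, huval k (lt_trans hk (lt_add_one j))]
        · rw [huval j (lt_add_one j)]
          exact hjS.2
    · -- t agrees with g on its domain; use splitting at t.dom
      push_neg at hcase
      obtain ⟨a, haS, hane⟩ := cobounded_ne hκ htspl (g t.dom)
      obtain ⟨t', ht'q, ht'dom, ht'val, ht'a⟩ := haS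
      have hdlt : t.dom < κ.ord := t.dom_lt
      obtain ⟨u, huq, hudom, huval⟩ := hg (t.dom + 1) (hsucc t.dom hdlt)
      refine ⟨t.dom, ⟨u, huq, ?_, ?_⟩, by
        rw [hsdom] at hst; exact lt_of_lt_of_le (lt_add_one β) hst⟩
      · intro k hk; rw [hudom] at hk; exact huval k hk
      · refine ⟨by rw [hudom]; exact lt_add_one _, t', ht'q, by rw [ht'dom]; exact lt_add_one _,
          ?_, ?_⟩
        · intro k hk
          rw [ht'val k hk, hcase k hk, huval k (lt_trans hk (lt_add_one _))]
        · rw [ht'a, huval t.dom (lt_add_one _)]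
          exact hane
  · -- closed
    intro β hβ hβlim hacc
    obtain ⟨s, hsq, hsdom, hsval⟩ := hg (β + 1) (hsucc β hβ)
    have hβdeg : β ∈ deg q s := by
      refine hcl s hsq β (by rw [hsdom]; exact lt_add_one β) hβlim ?_
      intro γ hγ
      obtain ⟨i, ⟨s', hs'q, hgs', hi'⟩, hγi, hiβ⟩ := hacc γ hγ
      obtain ⟨his', t, htq, hit, hagree, hne⟩ := hi'
      refine ⟨i, ⟨by rw [hsdom]; exact lt_trans hiβ (lt_add_one β), t, htq, hit, ?_, ?_⟩, hγi, hiβ⟩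
      · intro k hk
        rw [hagree k hk, hgs' k (lt_trans hk his'),
          hsval k (lt_trans (lt_trans hk hiβ) (lt_add_one β))]
      · rw [hsval i (lt_trans hiβ (lt_add_one β)), ← hgs' i his']
        exact hne
    exact ⟨s, hsq, fun k hk => hsval k (by rwa [hsdom] at hk), hβdeg⟩
  · -- C ⊆ {i | f i < g i}
    rintro i ⟨s, hsq, hgs, hideg⟩
    have := hD s hsq i hideg
    rwa [hgs i hideg.1] at this
end

section
/- Assume κ is a regular uncountable cardinal with κ^{<κ} = κ. For every function f : κ → κ and every condition p ∈ P(F*_κ), there exists a condition q ∈ P(F*_κ) with q ≥ p (that is, q ⊆ p) such that for every κ-branch g ∈ [q], the set {i < κ : f(i) < g(i)} contains a club of κ. -/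
open Cardinal Set

universe u

namespace Stmt6Aux

open Cardinal Set

variable {κ : Cardinal.{u}}

theorem knode_ext {s t : KNode κ} (h1 : s.dom = t.dom)
    (h2 : ∀ i, i < s.dom → s.val i = t.val i) : s = t := by
  obtain ⟨d, hd, v, hv, hz⟩ := s
  obtain ⟨d', hd', v', hv', hz'⟩ := t
  simp only at h1 h2 ⊢
  subst h1
  have hvv : v = v' := by
    funext i
    by_cases h : i < d
    · exact h2 i h
    · rw [hz i h, hz' i h]
  subst hvv
  rfl

theorem restrict_val_of_lt {s : KNode κ} {β : Ordinal.{u}} {h : β ≤ s.dom} {i : Ordinal.{u}}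
    (hi : i < β) : (s.restrict β h).val i = s.val i := if_pos hi

theorem lt_add_one (x : Ordinal.{u}) : x < x + 1 := Order.lt_add_one_iff.mpr le_rfl

theorem restrict_self (s : KNode κ) : s.restrict s.dom le_rfl = s :=
  knode_ext rfl fun i hi => restrict_val_of_lt hi

theorem deg_mono {p : Set (KNode κ)} {s t : KNode κ} {i : Ordinal.{u}}
    (ht : i < t.dom) (h : ∀ j, j ≤ i → s.val j = t.val j) (hs : i ∈ deg p s) :
    i ∈ deg p t := by
  obtain ⟨_, u, hu, hiu, hagree, hne⟩ := hs
  exact ⟨ht, u, hu, hiu, fun j hj => (hagree j hj).trans (h j hj.le),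
    fun he => hne (he.trans (h i le_rfl).symm)⟩

theorem mk_Iio_ord (hκ : ℵ₀ ≤ κ) : #(Set.Iio κ.ord) = Cardinal.lift.{u + 1} κ := by
  rw [Ordinal.mk_Iio_ordinal, Cardinal.card_ord]

theorem ord_succ_lt (hκ : ℵ₀ ≤ κ) {x : Ordinal.{u}} (hx : x < κ.ord) : x + 1 < κ.ord := by
  rw [Ordinal.add_one_eq_succ]
  exact (Cardinal.isSuccLimit_ord hκ).succ_lt hx

theorem ord_pos (hκ : ℵ₀ ≤ κ) : (0 : Ordinal.{u}) < κ.ord := (Cardinal.isSuccLimit_ord hκ).pos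

theorem mk_Iic_lt (hκ : ℵ₀ ≤ κ) {x : Ordinal.{u}} (hx : x < κ.ord) :
    #(↥(Set.Iic x)) < Cardinal.lift.{u + 1} κ := by
  have h1 : (Set.Iic x : Set Ordinal.{u}) = Set.Iio (x + 1) := by
    rw [Ordinal.add_one_eq_succ, Order.Iio_succ]
  rw [h1, Ordinal.mk_Iio_ordinal]
  exact Cardinal.lift_lt.2 (Cardinal.lt_ord.1 (ord_succ_lt hκ hx))

theorem cob_exists (hκ : ℵ₀ ≤ κ) {A : Set Ordinal.{u}} (hA : A ∈ cobounded κ)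
    {x : Ordinal.{u}} (hx : x < κ.ord) (c : Ordinal.{u}) : ∃ a ∈ A, x < a ∧ a ≠ c := by
  by_contra hcon
  push_neg at hcon
  have hsub : Set.Iio κ.ord ⊆ (Set.Iio κ.ord \ A) ∪ (Set.Iic x ∪ {c}) := by
    intro a ha
    by_cases hmem : a ∈ A
    · rcases le_or_gt a x with h | h
      · exact Or.inr (Or.inl h)
      · exact Or.inr (Or.inr (hcon a hmem h))
    · exact Or.inl ⟨ha, hmem⟩
  have hκ' : ℵ₀ ≤ Cardinal.lift.{u + 1} κ := Cardinal.aleph0_le_lift.2 hκ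
  have h2 : #(↥(Set.Iic x ∪ {c} : Set Ordinal.{u})) < Cardinal.lift.{u + 1} κ :=
    lt_of_le_of_lt (Cardinal.mk_union_le _ _)
      (Cardinal.add_lt_of_lt hκ' (mk_Iic_lt hκ hx)
        (by rw [Cardinal.mk_singleton]; exact lt_of_lt_of_le Cardinal.one_lt_aleph0 hκ'))
  have h3 : #(Set.Iio κ.ord) ≤ #(↥((Set.Iio κ.ord \ A) ∪ (Set.Iic x ∪ {c}))) :=
    Cardinal.mk_le_mk_of_subset hsub
  have h4 : #(↥((Set.Iio κ.ord \ A) ∪ (Set.Iic x ∪ {c}))) < Cardinal.lift.{u + 1} κ :=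
    lt_of_le_of_lt (Cardinal.mk_union_le _ _) (Cardinal.add_lt_of_lt hκ' hA.2 h2)
  rw [mk_Iio_ord hκ] at h3
  exact absurd (lt_of_le_of_lt h3 h4) (lt_irrefl _)

theorem singleton_not_cob (hκ : ℵ₀ ≤ κ) (a : Ordinal.{u}) :
    ({a} : Set Ordinal.{u}) ∉ cobounded κ := by
  intro h
  obtain ⟨b, hb, _, hbne⟩ := cob_exists hκ h (ord_pos hκ) a
  exact hbne hb

theorem cob_inter (hκ : ℵ₀ ≤ κ) {A : Set Ordinal.{u}} (hA : A ∈ cobounded κ)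
    {x : Ordinal.{u}} (hx : x < κ.ord) : {a ∈ A | x < a} ∈ cobounded κ := by
  constructor
  · exact fun a ha => hA.1 ha.1
  · have hsub : Set.Iio κ.ord \ {a ∈ A | x < a} ⊆ (Set.Iio κ.ord \ A) ∪ Set.Iic x := by
      rintro a ⟨haio, hna⟩
      by_cases hmem : a ∈ A
      · refine Or.inr ?_
        by_contra hle
        exact hna ⟨hmem, not_le.mp (fun h => hle h)⟩
      · exact Or.inl ⟨haio, hmem⟩
    have hκ' : ℵ₀ ≤ Cardinal.lift.{u + 1} κ := Cardinal.aleph0_le_lift.2 hκ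
    exact lt_of_le_of_lt (Cardinal.mk_le_mk_of_subset hsub)
      (lt_of_le_of_lt (Cardinal.mk_union_le _ _)
        (Cardinal.add_lt_of_lt hκ' hA.2 (mk_Iic_lt hκ hx)))

theorem mem_succ_of {T : Set (KNode κ)}
    (hT : ∀ s ∈ T, ∀ (β : Ordinal.{u}) (h : β ≤ s.dom), s.restrict β h ∈ T)
    {w x : KNode κ} (hw : w ∈ T) (hxw : x.dom < w.dom)
    (hagree : ∀ j, j < x.dom → w.val j = x.val j) : w.val x.dom ∈ succSet T x := by
  have hle : x.dom + 1 ≤ w.dom := Order.add_one_le_iff.mpr hxw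
  refine ⟨w.restrict (x.dom + 1) hle, hT w hw _ hle, rfl, ?_, ?_⟩
  · intro j hj
    rw [restrict_val_of_lt (hj.trans (lt_add_one _))]
    exact hagree j hj
  · exact restrict_val_of_lt (lt_add_one _)

/-- The pruned tree. -/
def qset (p : Set (KNode κ)) (f : Ordinal.{u} → Ordinal.{u}) : Set (KNode κ) :=
  {s ∈ p | ∀ i ∈ deg p s, f i < s.val i}

variable {p : Set (KNode κ)} {f : Ordinal.{u} → Ordinal.{u}}

theorem q_sub : qset p f ⊆ p := fun _ hs => hs.1

theorem two_elems_cob (hp : p ∈ PF κ (cobounded κ)) {x : KNode κ} (hx : x ∈ p)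
    {a b : Ordinal.{u}} (ha : a ∈ succSet p x) (hb : b ∈ succSet p x) (hab : a ≠ b) :
    succSet p x ∈ cobounded κ := by
  rcases hp.2.1 x hx with ⟨c, hc⟩ | h
  · rw [hc, mem_singleton_iff] at ha hb
    exact absurd (ha.trans hb.symm) hab
  · exact h

theorem q_restrict (hp : p ∈ PF κ (cobounded κ)) {s : KNode κ} (hs : s ∈ qset p f)
    (β : Ordinal.{u}) (h : β ≤ s.dom) : s.restrict β h ∈ qset p f := by
  refine ⟨hp.1.1.2 s hs.1 β h, ?_⟩
  intro i hi
  have hiβ : i < β := hi.1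
  have hds : i ∈ deg p s :=
    deg_mono (hiβ.trans_le h)
      (fun j hj => restrict_val_of_lt (lt_of_le_of_lt hj hiβ)) hi
  rw [restrict_val_of_lt hiβ]
  exact hs.2 i hds

theorem q_closed (hp : p ∈ PF κ (cobounded κ)) {s : KNode κ} (hlim : Order.IsSuccLimit s.dom)
    (h : ∀ (β : Ordinal.{u}) (hb : β < s.dom), s.restrict β hb.le ∈ qset p f) :
    s ∈ qset p f := by
  refine ⟨hp.1.2.2.2 s hlim (fun β hb => (h β hb).1), ?_⟩
  intro i hi
  have hi1 : i + 1 < s.dom := by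
    rw [Ordinal.add_one_eq_succ]; exact hlim.succ_lt hi.1
  have h2 : i ∈ deg p (s.restrict (i + 1) hi1.le) :=
    deg_mono (show i < (s.restrict (i + 1) hi1.le).dom from lt_add_one i)
      (fun j hj => (restrict_val_of_lt (lt_of_le_of_lt hj (lt_add_one i))).symm) hi
  have := (h (i + 1) hi1).2 i h2
  rwa [restrict_val_of_lt (lt_add_one i)] at this

theorem root_mem (hp : p ∈ PF κ (cobounded κ)) : ∃ s ∈ qset p f, s.dom = 0 := by
  obtain ⟨s0, hs0⟩ := hp.1.1.1
  refine ⟨s0.restrict 0 zero_le, ⟨hp.1.1.2 s0 hs0 0 zero_le, ?_⟩, rfl⟩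
  intro i hi
  exact absurd hi.1 (not_lt.2 (zero_le (a := i)))

theorem succ_mem (hp : p ∈ PF κ (cobounded κ)) {s : KNode κ} (hs : s ∈ qset p f)
    {t : KNode κ} (ht : t ∈ p) (hd : t.dom = s.dom + 1)
    (hv : ∀ i, i < s.dom → t.val i = s.val i)
    (hbig : succSet p s ∈ cobounded κ → f s.dom < t.val s.dom) : t ∈ qset p f := by
  refine ⟨ht, ?_⟩
  intro i hi
  have hile : i ≤ s.dom := by
    have := hi.1; rw [hd] at this; exact Order.lt_add_one_iff.mp this
  rcases lt_or_eq_of_le hile with hcase | hcase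
  · have : i ∈ deg p s :=
      deg_mono hcase (fun j hj => hv j (lt_of_le_of_lt hj hcase)) hi
    rw [hv i hcase]
    exact hs.2 i this
  · subst hcase
    obtain ⟨_, u, hu, hiu, hag, hne⟩ := hi
    have hmb : u.val s.dom ∈ succSet p s := by
      have : (s : KNode κ).dom < u.dom := hiu
      exact mem_succ_of hp.1.1.2 hu this (fun j hj => (hag j hj).trans (hv j hj))
    have hma : t.val s.dom ∈ succSet p s := ⟨t, ht, hd, hv, rfl⟩
    exact hbig (two_elems_cob hp hs.1 hmb hma hne)

theorem succ_exists (hκ : ℵ₀ ≤ κ) (hf : ∀ i, i < κ.ord → f i < κ.ord)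
    (hp : p ∈ PF κ (cobounded κ)) {s : KNode κ} (hs : s ∈ qset p f) :
    ∃ t ∈ qset p f, t.dom = s.dom + 1 ∧ ∀ i, i < s.dom → t.val i = s.val i := by
  rcases hp.2.1 s hs.1 with ⟨a, ha⟩ | hF
  · have haS : a ∈ succSet p s := by rw [ha]; exact rfl
    obtain ⟨t, ht, htd, htv, hta⟩ := haS
    refine ⟨t, succ_mem hp hs ht htd htv ?_, htd, htv⟩
    intro hF'
    rw [ha] at hF'
    exact absurd hF' (singleton_not_cob hκ a)
  · obtain ⟨a, haS, hfa, _⟩ := cob_exists hκ hF (hf s.dom s.dom_lt) 0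
    obtain ⟨t, ht, htd, htv, hta⟩ := haS
    refine ⟨t, succ_mem hp hs ht htd htv (fun _ => ?_), htd, htv⟩
    rw [hta]; exact hfa

theorem deg_q_eq (hκ : ℵ₀ ≤ κ) (hf : ∀ i, i < κ.ord → f i < κ.ord)
    (hp : p ∈ PF κ (cobounded κ)) {s : KNode κ} (hs : s ∈ qset p f) :
    deg (qset p f) s = deg p s := by
  ext i
  constructor
  · rintro ⟨hi, t, ht, h1, h2, h3⟩
    exact ⟨hi, t, ht.1, h1, h2, h3⟩
  · rintro ⟨hi, t, ht, hit, hag, hne⟩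
    have hiκ : i < κ.ord := hi.trans s.dom_lt
    have hsiq : s.restrict i hi.le ∈ qset p f := q_restrict hp hs i hi.le
    have hmem1 : s.val i ∈ succSet p (s.restrict i hi.le) := by
      have := mem_succ_of (T := p) hp.1.1.2 hs.1
        (show (s.restrict i hi.le).dom < s.dom from hi)
        (fun j hj => (restrict_val_of_lt (show j < i from hj)).symm)
      exact this
    have hmem2 : t.val i ∈ succSet p (s.restrict i hi.le) := by
      have := mem_succ_of (T := p) hp.1.1.2 ht
        (show (s.restrict i hi.le).dom < t.dom from hit)
        (fun j hj => ((hag j hj).trans (restrict_val_of_lt (show j < i from hj)).symm))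
      exact this
    have hF : succSet p (s.restrict i hi.le) ∈ cobounded κ :=
      two_elems_cob hp hsiq.1 hmem2 hmem1 hne
    obtain ⟨a, haS, hafi, hane⟩ := cob_exists hκ hF (hf i hiκ) (s.val i)
    obtain ⟨ta, hta, htad, htav, htava⟩ := haS
    have htaq : ta ∈ qset p f := by
      refine succ_mem hp hsiq hta htad ?_ (fun _ => ?_)
      · exact htav
      · show f i < ta.val i
        rw [show ta.val i = a from htava]
        exact hafi
    refine ⟨hi, ta, htaq, ?_, ?_, ?_⟩
    · rw [show ta.dom = i + 1 from htad]; exact lt_add_one i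
    · intro j hj
      exact (htav j hj).trans (restrict_val_of_lt hj)
    · rw [show ta.val i = a from htava]; exact hane

theorem succ_q_cob (hκ : ℵ₀ ≤ κ) (hf : ∀ i, i < κ.ord → f i < κ.ord)
    (hp : p ∈ PF κ (cobounded κ)) {s : KNode κ} (hs : s ∈ qset p f)
    (hsp : succSet p s ∈ cobounded κ) : succSet (qset p f) s ∈ cobounded κ := by
  have hfs : f s.dom < κ.ord := hf _ s.dom_lt
  have heq : succSet (qset p f) s = {a ∈ succSet p s | f s.dom < a} := by
    ext a
    constructor
    · rintro ⟨t, htq, htd, htv, hta⟩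
      refine ⟨⟨t, htq.1, htd, htv, hta⟩, ?_⟩
      obtain ⟨b, hbS, _, hbne⟩ := cob_exists hκ hsp (ord_pos hκ) a
      obtain ⟨tb, htb, htbd, htbv, htba⟩ := hbS
      have hdeg : s.dom ∈ deg p t := by
        refine ⟨by rw [htd]; exact lt_add_one _, tb, htb, by rw [htbd]; exact lt_add_one _,
          fun j hj => (htbv j hj).trans (htv j hj).symm, ?_⟩
        rw [htba, hta]; exact hbne
      have := htq.2 s.dom hdeg
      rwa [hta] at this
    · rintro ⟨⟨t, htp, htd, htv, hta⟩, hfa⟩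
      have htq : t ∈ qset p f := succ_mem hp hs htp htd htv (fun _ => by rw [hta]; exact hfa)
      exact ⟨t, htq, htd, htv, hta⟩
  rw [heq]
  exact cob_inter hκ hsp hfs

theorem q_split (hκ : ℵ₀ ≤ κ) (hf : ∀ i, i < κ.ord → f i < κ.ord)
    (hp : p ∈ PF κ (cobounded κ)) {s : KNode κ} (hs : s ∈ qset p f) :
    ∃ t ∈ qset p f, s.dom ≤ t.dom ∧ (∀ i, i < s.dom → t.val i = s.val i) ∧
      IsSplitting (cobounded κ) (qset p f) t := by
  obtain ⟨t0, ht0p, ht0d, ht0v, ht0sp⟩ := hp.1.2.2.1 s hs.1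
  set A : Set Ordinal.{u} :=
    {i | s.dom ≤ i ∧ ∃ h : i ≤ t0.dom, succSet p (t0.restrict i h) ∈ cobounded κ} with hA
  have hAne : A.Nonempty := ⟨t0.dom, ht0d, le_rfl, by rw [restrict_self]; exact ht0sp⟩
  have hi0A : sInf A ∈ A := csInf_mem hAne
  obtain ⟨hi0s, hi0t0, hi0sp⟩ := hi0A
  set i0 := sInf A
  have htq : t0.restrict i0 hi0t0 ∈ qset p f := by
    refine ⟨hp.1.1.2 t0 ht0p i0 hi0t0, ?_⟩
    intro i hi
    have hii0 : i < i0 := hi.1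
    rcases lt_or_ge i s.dom with hcase | hcase
    · have hds : i ∈ deg p s := by
        refine deg_mono hcase (fun j hj => ?_) hi
        rw [restrict_val_of_lt (lt_of_le_of_lt hj hii0), ht0v j (lt_of_le_of_lt hj hcase)]
      rw [restrict_val_of_lt hii0, ht0v i hcase]
      exact hs.2 i hds
    · exfalso
      obtain ⟨_, u, hup, hiu, huag, hune⟩ := hi
      have hit0 : i ≤ t0.dom := hii0.le.trans hi0t0
      have hm1 : t0.val i ∈ succSet p (t0.restrict i hit0) := by
        exact mem_succ_of (T := p) hp.1.1.2 ht0p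
          (show (t0.restrict i hit0).dom < t0.dom from hii0.trans_le hi0t0)
          (fun j hj => (restrict_val_of_lt (show j < i from hj)).symm)
      have hm2 : u.val i ∈ succSet p (t0.restrict i hit0) := by
        refine mem_succ_of (T := p) hp.1.1.2 hup
          (show (t0.restrict i hit0).dom < u.dom from hiu) (fun j hj => ?_)
        have hj' : (j : Ordinal.{u}) < i := hj
        rw [huag j hj', restrict_val_of_lt (hj'.trans hii0), restrict_val_of_lt hj']
      have hune' : u.val i ≠ t0.val i := by
        intro he
        exact hune (by rw [he, restrict_val_of_lt hii0])
      have hsp2 : succSet p (t0.restrict i hit0) ∈ cobounded κ :=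
        two_elems_cob hp (hp.1.1.2 t0 ht0p i hit0) hm2 hm1 hune'
      have hiA : i ∈ A := ⟨hcase, hit0, hsp2⟩
      exact absurd (csInf_le' hiA) (not_le.mpr hii0)
  refine ⟨t0.restrict i0 hi0t0, htq, hi0s, ?_, ?_⟩
  · intro i hi
    rw [restrict_val_of_lt (hi.trans_le hi0s), ht0v i hi]
  · exact succ_q_cob hκ hf hp htq hi0sp

theorem q_unbounded (hκ : ℵ₀ ≤ κ) (hf : ∀ i, i < κ.ord → f i < κ.ord)
    (hp : p ∈ PF κ (cobounded κ)) {β : Ordinal.{u}} (hβ : β < κ.ord) :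
    ∃ s ∈ qset p f, β ≤ s.dom := by
  by_contra hcon
  push_neg at hcon
  obtain ⟨rt, hrt, hrtdom⟩ := root_mem (f := f) hp
  let r : (qset p f) → (qset p f) → Prop :=
    fun s t => s.1.dom ≤ t.1.dom ∧ ∀ i, i < s.1.dom → s.1.val i = t.1.val i
  have hchain : IsChain r {(⟨rt, hrt⟩ : qset p f)} := Set.subsingleton_singleton.isChain
  obtain ⟨M, hM, hMsub⟩ := hchain.exists_maxChain
  have hrtM : (⟨rt, hrt⟩ : qset p f) ∈ M := hMsub rfl
  have hcoh : ∀ s ∈ M, ∀ t ∈ M, ∀ i, i < s.1.dom → i < t.1.dom → s.1.val i = t.1.val i := by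
    intro s hsM t htM i his hit
    rcases eq_or_ne s t with rfl | hne
    · rfl
    rcases hM.1 hsM htM hne with h | h
    · exact h.2 i his
    · exact (h.2 i hit).symm
  set D : Set Ordinal.{u} := (fun s : (qset p f) => s.1.dom) '' M with hD
  have hDne : D.Nonempty := ⟨rt.dom, ⟨⟨rt, hrt⟩, hrtM, rfl⟩⟩
  have hDbd : ∀ d ∈ D, d < β := by
    rintro d ⟨s, hsM, rfl⟩
    exact hcon s.1 s.2
  have hDbdd : BddAbove D := ⟨β, fun d hd => (hDbd d hd).le⟩
  set δ := sSup D with hδdef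
  have hδβ : δ ≤ β := csSup_le hDne (fun d hd => (hDbd d hd).le)
  have hδκ : δ < κ.ord := lt_of_le_of_lt hδβ hβ
  by_cases hatt : ∃ s ∈ M, s.1.dom = δ
  · obtain ⟨s, hsM, hsdom⟩ := hatt
    have htop : ∀ t ∈ M, t.1.dom ≤ s.1.dom ∧ ∀ i, i < t.1.dom → t.1.val i = s.1.val i := by
      intro t htM
      have h1 : t.1.dom ≤ s.1.dom := by
        rw [hsdom]; exact le_csSup hDbdd ⟨t, htM, rfl⟩
      exact ⟨h1, fun i hi => hcoh t htM s hsM i hi (hi.trans_le h1)⟩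
    obtain ⟨t, htq, htdom, htv⟩ := succ_exists hκ hf hp s.2
    have htnotM : (⟨t, htq⟩ : qset p f) ∉ M := by
      intro hmem
      have h1 : t.dom ≤ δ := le_csSup hDbdd ⟨⟨t, htq⟩, hmem, rfl⟩
      rw [htdom, hsdom] at h1
      exact absurd h1 (not_le.mpr (lt_add_one δ))
    have hins : IsChain r (insert (⟨t, htq⟩ : qset p f) M) := by
      refine hM.1.insert (fun b hb _ => Or.inr ?_)
      obtain ⟨hb1, hb2⟩ := htop b hb
      refine ⟨le_trans hb1 (by rw [htdom]; exact (lt_add_one _).le), fun i hi => ?_⟩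
      rw [hb2 i hi, htv i (hi.trans_le hb1)]
    have := hM.2 hins (subset_insert _ _)
    exact htnotM (this ▸ mem_insert _ _)
  · have hnat : ∀ s ∈ M, s.1.dom < δ := by
      intro s hsM
      exact lt_of_le_of_ne (le_csSup hDbdd ⟨s, hsM, rfl⟩) (fun h => hatt ⟨s, hsM, h⟩)
    have hδ0 : δ ≠ 0 := by
      intro h0
      exact absurd (h0 ▸ hnat _ hrtM : rt.dom < 0)
        (by rw [hrtdom]; exact lt_irrefl 0)
    have hδlim : Order.IsSuccLimit δ := by
      refine Ordinal.isSuccLimit_iff.2 ⟨hδ0, Order.isSuccPrelimit_iff_succ_lt.2 fun a ha => ?_⟩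
      obtain ⟨d, hdD, had⟩ := exists_lt_of_lt_csSup hDne ha
      obtain ⟨s, hsM, rfl⟩ := hdD
      have h1 : Order.succ a ≤ s.1.dom := Order.succ_le_of_lt had
      exact lt_of_le_of_lt h1 (hnat s hsM)
    have hvmem : ∀ i, i < δ → ∃ s : (qset p f), s ∈ M ∧ i < s.1.dom := by
      intro i hi
      obtain ⟨d, hdD, hid⟩ := exists_lt_of_lt_csSup hDne hi
      obtain ⟨s, hsM, rfl⟩ := hdD
      exact ⟨s, hsM, hid⟩
    classical
    let v : Ordinal.{u} → Ordinal.{u} := fun i =>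
      if h : ∃ s : (qset p f), s ∈ M ∧ i < s.1.dom then (Classical.choose h).1.val i else 0
    have hvagree : ∀ (s : (qset p f)), s ∈ M → ∀ i, i < s.1.dom → v i = s.1.val i := by
      intro s hsM i hi
      have hex : ∃ t : (qset p f), t ∈ M ∧ i < t.1.dom := ⟨s, hsM, hi⟩
      simp only [v, dif_pos hex]
      exact hcoh _ (Classical.choose_spec hex).1 s hsM i (Classical.choose_spec hex).2 hi
    let u : KNode κ := {
      dom := δ
      dom_lt := hδκ
      val := v
      val_lt := by
        intro i hi
        obtain ⟨s, hsM, his⟩ := hvmem i hi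
        rw [hvagree s hsM i his]
        exact s.1.val_lt i his
      val_zero := by
        intro i hi
        have hex : ¬ ∃ s : (qset p f), s ∈ M ∧ i < s.1.dom := by
          rintro ⟨s, hsM, his⟩
          exact hi (his.trans (hnat s hsM))
        exact dif_neg hex }
    have humem : u ∈ qset p f := by
      refine q_closed hp (show Order.IsSuccLimit u.dom from hδlim) ?_
      intro γ hγ
      obtain ⟨s, hsM, hγs⟩ := hvmem γ hγ
      have heq : u.restrict γ hγ.le = s.1.restrict γ hγs.le := by
        refine knode_ext rfl ?_
        intro i hi
        have hi' : (i : Ordinal.{u}) < γ := hi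
        rw [restrict_val_of_lt hi', restrict_val_of_lt hi']
        exact hvagree s hsM i (hi'.trans hγs)
      rw [heq]
      exact q_restrict hp s.2 γ hγs.le
    have hune : (⟨u, humem⟩ : qset p f) ∉ M := fun hmem => hatt ⟨⟨u, humem⟩, hmem, rfl⟩
    have hins : IsChain r (insert (⟨u, humem⟩ : qset p f) M) := by
      refine hM.1.insert (fun b hb _ => Or.inr ?_)
      exact ⟨(hnat b hb).le, fun i hi => (hvagree b hb i hi).symm⟩
    have := hM.2 hins (subset_insert _ _)
    exact hune (this ▸ mem_insert _ _)

theorem q_PF (hκ : ℵ₀ ≤ κ) (hf : ∀ i, i < κ.ord → f i < κ.ord)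
    (hp : p ∈ PF κ (cobounded κ)) : qset p f ∈ PF κ (cobounded κ) := by
  refine ⟨⟨⟨?_, ?_⟩, ?_, ?_, ?_⟩, ?_, ?_⟩
  · obtain ⟨rt, hrt, _⟩ := root_mem (f := f) hp
    exact ⟨rt, hrt⟩
  · exact fun s hs β h => q_restrict hp hs β h
  · intro β hβ
    exact q_unbounded hκ hf hp hβ
  · intro s hs
    exact q_split hκ hf hp hs
  · intro s hlim h
    exact q_closed hp hlim h
  · intro s hs
    rcases hp.2.1 s hs.1 with ⟨a, ha⟩ | hF
    · left
      refine ⟨a, Set.Subset.antisymm ?_ ?_⟩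
      · intro b hb
        obtain ⟨t, htq, htd, htv, hta⟩ := hb
        have : b ∈ succSet p s := ⟨t, htq.1, htd, htv, hta⟩
        rw [ha] at this
        exact this
      · intro b hb
        rw [mem_singleton_iff] at hb
        subst hb
        have haS : b ∈ succSet p s := by rw [ha]; exact rfl
        obtain ⟨t, ht, htd, htv, hta⟩ := haS
        have htq : t ∈ qset p f := by
          refine succ_mem hp hs ht htd htv (fun hF' => ?_)
          rw [ha] at hF'
          exact absurd hF' (singleton_not_cob hκ _)
        exact ⟨t, htq, htd, htv, hta⟩
    · right
      exact succ_q_cob hκ hf hp hs hF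
  · intro s hs
    rw [deg_q_eq hκ hf hp hs]
    exact hp.2.2 s hs.1

end Stmt6Aux

/-- If `κ` is regular uncountable with `κ^{<κ} = κ`, then for every
`f : κ → κ` and every `p ∈ P(F*_κ)` there is `q ∈ P(F*_κ)` with `q ≥ p` such that every
κ-branch `g` of `q` dominates `f` on a club of `κ`. -/
theorem stmt_6 (κ : Cardinal.{u}) (hreg : κ.IsRegular) (huncount : ℵ₀ < κ)
    (hpow : κ ^< κ = κ)
    (f : Ordinal.{u} → Ordinal.{u}) (hf : ∀ i, i < κ.ord → f i < κ.ord)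
    (p : Set (KNode κ)) (hp : p ∈ PF κ (cobounded κ)) :
    ∃ q ∈ PF κ (cobounded κ), q ⊆ p ∧
      ∀ g : Ordinal.{u} → Ordinal.{u}, IsBranch q g →
        ∃ C : Set Ordinal.{u}, IsClubBelow C κ.ord ∧ C ⊆ {i | f i < g i} := by
  classical
  have hκ : ℵ₀ ≤ κ := hreg.aleph0_le
  refine ⟨Stmt6Aux.qset p f, Stmt6Aux.q_PF hκ hf hp, fun s hs => hs.1, ?_⟩
  intro g hg
  choose Gn hGn1 hGn2 hGn3 using hg
  have hsucclt : ∀ x : Ordinal.{u}, x < κ.ord → x + 1 < κ.ord :=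
    fun x hx => Stmt6Aux.ord_succ_lt hκ hx
  set q := Stmt6Aux.qset p f with hqdef
  set C : Set Ordinal.{u} :=
    {i | ∃ h : i + 1 < κ.ord, i ∈ deg p (Gn (i + 1) h)} with hC
  have hCIio : C ⊆ Set.Iio κ.ord := by
    rintro i ⟨h, _⟩
    exact (Stmt6Aux.lt_add_one i).trans h
  have htrans : ∀ (i α : Ordinal.{u}) (hiα : i < α) (hα : α < κ.ord),
      i ∈ C ↔ i ∈ deg p (Gn α hα) := by
    intro i α hiα hα
    have hiκ : i < κ.ord := hiα.trans hα
    constructor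
    · rintro ⟨h, hdeg⟩
      refine Stmt6Aux.deg_mono ?_ ?_ hdeg
      · rw [hGn2 α hα]; exact hiα
      · intro j hj
        rw [hGn3 (i + 1) h j (lt_of_le_of_lt hj (Stmt6Aux.lt_add_one i)),
          hGn3 α hα j (lt_of_le_of_lt hj hiα)]
    · intro hdeg
      refine ⟨hsucclt i hiκ, Stmt6Aux.deg_mono ?_ ?_ hdeg⟩
      · rw [hGn2 (i + 1) (hsucclt i hiκ)]; exact Stmt6Aux.lt_add_one i
      · intro j hj
        rw [hGn3 α hα j (lt_of_le_of_lt hj hiα),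
          hGn3 (i + 1) (hsucclt i hiκ) j (lt_of_le_of_lt hj (Stmt6Aux.lt_add_one i))]
  refine ⟨C, ⟨hCIio, ?_, ?_⟩, ?_⟩
  · -- unbounded
    intro β hβ
    have hβ1 : β + 1 < κ.ord := hsucclt β hβ
    have hsq : Gn (β + 1) hβ1 ∈ q := hGn1 (β + 1) hβ1
    have hsdom : (Gn (β + 1) hβ1).dom = β + 1 := hGn2 (β + 1) hβ1
    obtain ⟨t, htq, htd, htv, htsp⟩ := Stmt6Aux.q_split hκ hf hp hsq
    rw [hsdom] at htd
    have hqres : ∀ s ∈ q, ∀ (γ : Ordinal.{u}) (h : γ ≤ s.dom), s.restrict γ h ∈ q :=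
      fun s hs γ h => Stmt6Aux.q_restrict hp hs γ h
    set A : Set Ordinal.{u} :=
      {i | β + 1 ≤ i ∧ ∃ h : i ≤ t.dom, succSet q (t.restrict i h) ∈ cobounded κ} with hA
    have hAne : A.Nonempty :=
      ⟨t.dom, htd, le_rfl, by rw [Stmt6Aux.restrict_self]; exact htsp⟩
    have hi0A : sInf A ∈ A := csInf_mem hAne
    obtain ⟨hβi0, hi0t, hi0sp⟩ := hi0A
    set i0 := sInf A
    have hi0κ : i0 < κ.ord := lt_of_le_of_lt hi0t t.dom_lt
    have hval : ∀ i, i < i0 → t.val i = g i := by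
      intro i
      induction i using Ordinal.induction with
      | _ i IH =>
      intro hii0
      have hiκ : i < κ.ord := hii0.trans hi0κ
      rcases lt_or_ge i (β + 1) with hc | hc
      · rw [htv i (by rw [hsdom]; exact hc)]
        exact hGn3 (β + 1) hβ1 i hc
      · have hit : i ≤ t.dom := hii0.le.trans hi0t
        have hnA : i ∉ A := fun hiA => absurd (csInf_le' hiA) (not_le.mpr hii0)
        have hnsp : succSet q (t.restrict i hit) ∉ cobounded κ :=
          fun hsp => hnA ⟨hc, hit, hsp⟩
        have htiq : t.restrict i hit ∈ q := hqres t htq i hit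
        have hsing : ∃ a, succSet q (t.restrict i hit) = {a} := by
          rcases (Stmt6Aux.q_PF hκ hf hp).2.1 _ htiq with h | h
          · exact h
          · exact absurd h hnsp
        have hm1 : t.val i ∈ succSet q (t.restrict i hit) := by
          exact Stmt6Aux.mem_succ_of hqres htq
            (show (t.restrict i hit).dom < t.dom from hii0.trans_le hi0t)
            (fun j hj => (Stmt6Aux.restrict_val_of_lt (show j < i from hj)).symm)
        have hm2 : g i ∈ succSet q (t.restrict i hit) := by
          refine ⟨Gn (i + 1) (hsucclt i hiκ), hGn1 _ _, ?_, ?_, ?_⟩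
          · rw [hGn2]; rfl
          · intro j hj
            have hj' : (j : Ordinal.{u}) < i := hj
            rw [hGn3 (i + 1) (hsucclt i hiκ) j (hj'.trans (Stmt6Aux.lt_add_one i)),
              Stmt6Aux.restrict_val_of_lt hj', ← IH j hj' (hj'.trans hii0)]
          · show (Gn (i + 1) (hsucclt i hiκ)).val i = g i
            exact hGn3 (i + 1) (hsucclt i hiκ) i (Stmt6Aux.lt_add_one i)
        obtain ⟨a, ha⟩ := hsing
        rw [ha, mem_singleton_iff] at hm1 hm2
        rw [hm1, hm2]
    obtain ⟨b, hbS, _, hbne⟩ := Stmt6Aux.cob_exists hκ hi0sp (Stmt6Aux.ord_pos hκ) (g i0)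
    obtain ⟨tb, htbq, htbd, htbv, htba⟩ := hbS
    have htbd' : tb.dom = i0 + 1 := htbd
    have htbv' : ∀ j, j < i0 → tb.val j = t.val j := fun j hj =>
      (htbv j hj).trans (Stmt6Aux.restrict_val_of_lt hj)
    have htba' : tb.val i0 = b := htba
    have hi01 : i0 + 1 < κ.ord := hsucclt i0 hi0κ
    refine ⟨i0, ⟨hi01, ?_⟩, lt_of_lt_of_le (Stmt6Aux.lt_add_one β) hβi0⟩
    refine ⟨by rw [hGn2]; exact Stmt6Aux.lt_add_one i0, tb, htbq.1, ?_, ?_, ?_⟩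
    · rw [htbd']; exact Stmt6Aux.lt_add_one i0
    · intro j hj
      have hj' : (j : Ordinal.{u}) < i0 := hj
      rw [htbv' j hj', hval j hj',
        hGn3 (i0 + 1) hi01 j (hj'.trans (Stmt6Aux.lt_add_one i0))]
    · rw [htba', hGn3 (i0 + 1) hi01 i0 (Stmt6Aux.lt_add_one i0)]
      exact hbne
  · -- closed
    intro β hβ hblim hacc
    have hβ1 : β + 1 < κ.ord := hsucclt β hβ
    have hclosed := hp.2.2 (Gn (β + 1) hβ1) (hGn1 (β + 1) hβ1).1
    have hmem : β ∈ deg p (Gn (β + 1) hβ1) := by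
      refine hclosed β (by rw [hGn2]; exact Stmt6Aux.lt_add_one β) hblim ?_
      intro γ hγ
      obtain ⟨i, hiC, hγi, hiβ⟩ := hacc γ hγ
      exact ⟨i, (htrans i (β + 1) (hiβ.trans (Stmt6Aux.lt_add_one β)) hβ1).1 hiC, hγi, hiβ⟩
    exact ⟨hβ1, hmem⟩
  · -- domination
    rintro i ⟨h, hdeg⟩
    have := (hGn1 (i + 1) h).2 i hdeg
    rwa [hGn3 (i + 1) h i (Stmt6Aux.lt_add_one i)] at this
end

section
/- Assume κ is a regular uncountable cardinal with κ^{<κ} = κ. Let p ∈ P(F*_κ), and suppose that for every node t ∈ p that is F*_κ-splitting in p we are given a set B_t ∈ F*_κ with B_t ⊆ {α < κ : t⌢⟨α⟩ ∈ p}. Define q = {s ∈ p : for every i < dom(s), if s↾i is F*_κ-splitting in p then s(i) ∈ B_{s↾i}}. Then q is a condition in P(F*_κ), q ≥ p (that is, q ⊆ p), and deg_q(s) = deg_p(s) for every s ∈ q. -/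
open Cardinal Set

universe u

namespace KNode

theorem ext' {κ : Cardinal.{u}} {s t : KNode κ} (hd : s.dom = t.dom)
    (hv : ∀ i, i < s.dom → s.val i = t.val i) : s = t := by
  obtain ⟨d1, _, v1, _, z1⟩ := s
  obtain ⟨d2, _, v2, _, z2⟩ := t
  simp only at hd hv
  subst hd
  simp only [KNode.mk.injEq, true_and, heq_eq_eq, and_true]
  refine funext fun i => ?_
  by_cases h : i < d1
  · exact hv i h
  · rw [z1 i h, z2 i h]

variable {κ : Cardinal.{u}}

@[simp] theorem restrict_dom (s : KNode κ) (β h) : (s.restrict β h).dom = β := rfl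

theorem restrict_val (s : KNode κ) (β h i) :
    (s.restrict β h).val i = if i < β then s.val i else 0 := rfl

theorem restrict_restrict (s : KNode κ) {β γ : Ordinal.{u}} (h : β ≤ s.dom)
    (h'' : γ ≤ (s.restrict β h).dom) :
    (s.restrict β h).restrict γ h'' = s.restrict γ ((show γ ≤ β from h'').trans h) := by
  refine ext' rfl fun i hi => ?_
  have hi' : i < γ := hi
  simp only [restrict_val]
  rw [if_pos hi', if_pos hi', if_pos (show i < β from lt_of_lt_of_le hi' h'')]

theorem restrict_self (s : KNode κ) : s.restrict s.dom le_rfl = s :=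
  ext' rfl fun i hi => by simp only [restrict_val]; rw [if_pos (show i < s.dom from hi)]

theorem restrict_eq_restrict {s t : KNode κ} (i : Ordinal.{u}) (hs : i ≤ s.dom)
    (ht : i ≤ t.dom) (h : ∀ j, j < i → s.val j = t.val j) :
    s.restrict i hs = t.restrict i ht := by
  refine ext' rfl fun j hj => ?_
  have hj' : j < i := hj
  simp only [restrict_val]
  rw [if_pos hj', if_pos hj', h j hj']

end KNode

theorem lt_add_one_ord (i : Ordinal.{u}) : i < i + 1 := by
  rw [Ordinal.add_one_eq_succ]; exact Order.lt_succ i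

theorem lt_add_one_iff_ord {i j : Ordinal.{u}} : i < j + 1 ↔ i ≤ j := by
  rw [Ordinal.add_one_eq_succ, Order.lt_succ_iff]

theorem add_one_le_iff_ord {i j : Ordinal.{u}} : i + 1 ≤ j ↔ i < j := by
  rw [Ordinal.add_one_eq_succ, Order.succ_le_iff]

theorem succSet_subset_Iio {κ : Cardinal.{u}} (p : Set (KNode κ)) (s : KNode κ) :
    succSet p s ⊆ Set.Iio κ.ord := by
  rintro a ⟨t, _, htd, _, htv⟩
  rw [← htv]
  exact t.val_lt s.dom (by rw [htd]; exact lt_add_one_ord s.dom)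

theorem succSet_mono {κ : Cardinal.{u}} {p q : Set (KNode κ)} (h : q ⊆ p) (s : KNode κ) :
    succSet q s ⊆ succSet p s := by
  rintro a ⟨t, htq, h1, h2, h3⟩
  exact ⟨t, h htq, h1, h2, h3⟩

theorem cobounded_exists_ne {κ : Cardinal.{u}} (hκ : ℵ₀ ≤ κ) {A : Set Ordinal.{u}}
    (hA : A ∈ cobounded κ) (a : Ordinal.{u}) : ∃ b ∈ A, b ≠ a := by
  by_contra hcon
  push_neg at hcon
  have hsub : Set.Iio κ.ord ⊆ (Set.Iio κ.ord \ A) ∪ {a} := by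
    intro x hx
    by_cases hxA : x ∈ A
    · exact Or.inr (hcon x hxA)
    · exact Or.inl ⟨hx, hxA⟩
  have h1 : Cardinal.lift.{u + 1} κ ≤ #(↥((Set.Iio κ.ord \ A) ∪ {a})) := by
    have hmk : #(↥(Set.Iio κ.ord)) = Cardinal.lift.{u + 1} κ := by
      rw [Ordinal.mk_Iio_ordinal, Cardinal.card_ord]
    rw [← hmk]
    exact Cardinal.mk_le_mk_of_subset hsub
  have h2 : #(↥((Set.Iio κ.ord \ A) ∪ {a})) ≤ #(↥(Set.Iio κ.ord \ A)) + 1 := by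
    refine le_trans (Cardinal.mk_union_le _ _) ?_
    rw [Cardinal.mk_singleton]
  have h3 : #(↥(Set.Iio κ.ord \ A)) + 1 < Cardinal.lift.{u + 1} κ := by
    refine Cardinal.add_lt_of_lt ?_ hA.2 ?_
    · rwa [Cardinal.aleph0_le_lift]
    · exact lt_of_lt_of_le Cardinal.one_lt_aleph0 (by rwa [Cardinal.aleph0_le_lift])
  exact absurd ((h1.trans h2).trans_lt h3) (lt_irrefl _)

theorem cobounded_nonempty {κ : Cardinal.{u}} (hκ : ℵ₀ ≤ κ) {A : Set Ordinal.{u}}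
    (hA : A ∈ cobounded κ) : A.Nonempty := by
  obtain ⟨b, hb, _⟩ := cobounded_exists_ne hκ hA 0
  exact ⟨b, hb⟩

theorem singleton_not_cobounded {κ : Cardinal.{u}} (hκ : ℵ₀ ≤ κ) (a : Ordinal.{u}) :
    ({a} : Set Ordinal.{u}) ∉ cobounded κ := by
  intro h
  obtain ⟨b, hb, hbne⟩ := cobounded_exists_ne hκ h a
  exact hbne hb

theorem cobounded_upward {κ : Cardinal.{u}} {A C : Set Ordinal.{u}} (hA : A ∈ cobounded κ)
    (hAC : A ⊆ C) (hC : C ⊆ Set.Iio κ.ord) : C ∈ cobounded κ := by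
  refine ⟨hC, lt_of_le_of_lt ?_ hA.2⟩
  exact Cardinal.mk_le_mk_of_subset (fun x hx => ⟨hx.1, fun hxC => hx.2 (hAC hxC)⟩)

open Classical in
noncomputable def pickSucc {κ : Cardinal.{u}} (q : Set (KNode κ)) (u : KNode κ) :
    Ordinal.{u} :=
  if h : (succSet q u).Nonempty then h.choose else 0

theorem pickSucc_mem {κ : Cardinal.{u}} {q : Set (KNode κ)} {u : KNode κ}
    (h : (succSet q u).Nonempty) : pickSucc q u ∈ succSet q u := by
  rw [pickSucc, dif_pos h]
  exact h.choose_spec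

noncomputable def mkNode (κ : Cardinal.{u}) (v : Ordinal.{u} → Ordinal.{u}) (i : Ordinal.{u})
    (hi : i < κ.ord) : KNode κ where
  dom := i
  dom_lt := hi
  val := fun j => if j < i ∧ v j < κ.ord then v j else 0
  val_lt := fun j hj => by
    show (if j < i ∧ v j < κ.ord then v j else 0) < κ.ord
    by_cases h : j < i ∧ v j < κ.ord
    · rw [if_pos h]; exact h.2
    · rw [if_neg h]; exact lt_of_le_of_lt zero_le (hj.trans hi)
  val_zero := fun j hj => if_neg fun h => hj h.1

@[simp] theorem mkNode_dom (κ : Cardinal.{u}) (v i hi) : (mkNode κ v i hi).dom = i := rfl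

theorem mkNode_val (κ : Cardinal.{u}) (v i hi j) :
    (mkNode κ v i hi).val j = if j < i ∧ v j < κ.ord then v j else 0 := rfl

theorem mkNode_congr (κ : Cardinal.{u}) (v w : Ordinal.{u} → Ordinal.{u}) (i hi)
    (h : ∀ j, j < i → v j = w j) : mkNode κ v i hi = mkNode κ w i hi := by
  refine KNode.ext' rfl fun j hj => ?_
  have hj' : j < i := hj
  simp only [mkNode_val]
  rw [h j hj']

theorem restrict_mkNode (κ : Cardinal.{u}) (v : Ordinal.{u} → Ordinal.{u}) (i hi) (β)
    (h : β ≤ (mkNode κ v i hi).dom) :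
    (mkNode κ v i hi).restrict β h =
      mkNode κ v β (lt_of_le_of_lt (show β ≤ i from h) hi) := by
  refine KNode.ext' rfl fun j hj => ?_
  have hj' : j < β := hj
  simp only [KNode.restrict_val, mkNode_val]
  rw [if_pos hj']
  by_cases hc : v j < κ.ord
  · rw [if_pos ⟨lt_of_lt_of_le hj' (show β ≤ i from h), hc⟩, if_pos ⟨hj', hc⟩]
  · rw [if_neg fun x => hc x.2, if_neg fun x => hc x.2]

noncomputable def branchVal {κ : Cardinal.{u}} (q : Set (KNode κ)) :
    Ordinal.{u} → Ordinal.{u} :=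
  (wellFounded_lt (α := Ordinal.{u})).fix fun i rec =>
    if hi : i < κ.ord then
      pickSucc q (mkNode κ (fun j => if hj : j < i then rec j hj else 0) i hi)
    else 0

theorem branchVal_eq {κ : Cardinal.{u}} (q : Set (KNode κ)) (i : Ordinal.{u})
    (hi : i < κ.ord) :
    branchVal q i = pickSucc q (mkNode κ (branchVal q) i hi) := by
  conv_lhs => rw [branchVal, WellFounded.fix_eq]
  rw [dif_pos hi]
  refine congrArg (pickSucc q) (mkNode_congr κ _ _ i hi fun j hj => ?_)
  rw [dif_pos hj]
  rfl

theorem branch_mem {κ : Cardinal.{u}} (q : Set (KNode κ))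
    (hroot : ∀ u : KNode κ, u.dom = 0 → u ∈ q)
    (hsucc : ∀ u ∈ q, (succSet q u).Nonempty)
    (hlim : ∀ s : KNode κ, Order.IsSuccLimit s.dom →
      (∀ β (h : β < s.dom), s.restrict β h.le ∈ q) → s ∈ q) :
    ∀ i (hi : i < κ.ord), mkNode κ (branchVal q) i hi ∈ q := by
  intro i
  induction i using Ordinal.limitRecOn with
  | zero => exact fun hi => hroot _ rfl
  | add_one i ih =>
    rw [Ordinal.add_one_eq_succ]
    intro hi
    have hi' : i < κ.ord := (Order.lt_succ i).trans hi
    set u := mkNode κ (branchVal q) i hi' with hu_def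
    have hu : u ∈ q := ih hi'
    have ha : pickSucc q u ∈ succSet q u := pickSucc_mem (hsucc u hu)
    obtain ⟨t, htq, htd, hagr, htv⟩ := ha
    have hbv : branchVal q i = t.val i := by
      rw [branchVal_eq q i hi']; exact htv.symm
    have htd' : t.dom = Order.succ i := by
      rw [htd, mkNode_dom, Ordinal.add_one_eq_succ]
    have : mkNode κ (branchVal q) (Order.succ i) hi = t := by
      refine KNode.ext' (by rw [mkNode_dom, htd']) fun j hj => ?_
      have hj' : j < Order.succ i := hj
      rw [mkNode_val]
      rcases lt_or_eq_of_le (Order.lt_succ_iff.mp hj') with hji | hji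
      · have := hagr j (by rwa [mkNode_dom])
        rw [mkNode_val] at this
        by_cases hc : branchVal q j < κ.ord
        · rw [if_pos ⟨hj', hc⟩, this, if_pos ⟨hji, hc⟩]
        · rw [if_neg fun x => hc x.2, this, if_neg fun x => hc x.2]
      · subst hji
        have hvlt : branchVal q j < κ.ord := by
          rw [hbv]; exact t.val_lt j (by rw [htd']; exact Order.lt_succ j)
        rw [if_pos ⟨hj', hvlt⟩, hbv]
    rw [this]
    exact htq
  | limit i hl ih =>
    intro hi
    refine hlim (mkNode κ (branchVal q) i hi) hl fun β h => ?_
    have hβ : β < i := h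
    rw [restrict_mkNode]
    exact ih β hβ (hβ.trans hi)

/-- thinning out a condition `p ∈ P(F*_κ)` by shrinking each splitting
level to a co-bounded set `B_t ⊆ succSet p t` yields a condition `q ∈ P(F*_κ)` with
`q ≥ p` and the same splitting histories. -/
theorem stmt_10 (κ : Cardinal.{u}) (hreg : κ.IsRegular) (huncount : ℵ₀ < κ)
    (hpow : κ ^< κ = κ)
    (p : Set (KNode κ)) (hp : p ∈ PF κ (cobounded κ))
    (B : KNode κ → Set Ordinal.{u})
    (hB : ∀ t ∈ p, IsSplitting (cobounded κ) p t →
      B t ∈ cobounded κ ∧ B t ⊆ succSet p t)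
    (q : Set (KNode κ))
    (hq : q = {s | s ∈ p ∧ ∀ i (h : i < s.dom),
      IsSplitting (cobounded κ) p (s.restrict i h.le) → s.val i ∈ B (s.restrict i h.le)}) :
    q ∈ PF κ (cobounded κ) ∧ q ⊆ p ∧ ∀ s ∈ q, deg q s = deg p s := by
  have hκ : ℵ₀ ≤ κ := huncount.le
  have hmem : ∀ s : KNode κ, s ∈ q ↔ s ∈ p ∧ ∀ i (h : i < s.dom),
      IsSplitting (cobounded κ) p (s.restrict i h.le) → s.val i ∈ B (s.restrict i h.le) := by
    intro s; rw [hq]; exact Iff.rfl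
  obtain ⟨⟨⟨hpne, hpres⟩, hpunb, hpsplit, hpclosed⟩, hpo, hpi⟩ := hp
  have hqp : q ⊆ p := fun s hs => ((hmem s).mp hs).1
  have hqres : ∀ s ∈ q, ∀ (β : Ordinal.{u}) (h : β ≤ s.dom), s.restrict β h ∈ q := by
    intro s hs β h
    obtain ⟨hsp, hsB⟩ := (hmem s).mp hs
    refine (hmem _).mpr ⟨hpres s hsp β h, ?_⟩
    intro i hi hisp
    have hi2 : i < s.dom := lt_of_lt_of_le hi h
    rw [KNode.restrict_restrict] at hisp ⊢
    rw [KNode.restrict_val, if_pos (show i < β from hi)]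
    exact hsB i hi2 hisp
  have hroot : ∀ u : KNode κ, u.dom = 0 → u ∈ q := by
    intro u hu
    obtain ⟨s0, hs0⟩ := hpne
    have h0 : u = s0.restrict 0 zero_le := by
      refine KNode.ext' (by rw [hu, KNode.restrict_dom]) fun i hi => ?_
      rw [hu] at hi; exact absurd hi ((show (0 : Ordinal.{u}) ≤ i from zero_le).not_gt)
    refine (hmem u).mpr ⟨?_, ?_⟩
    · rw [h0]; exact hpres s0 hs0 0 zero_le
    · intro i hi; rw [hu] at hi; exact absurd hi ((show (0 : Ordinal.{u}) ≤ i from zero_le).not_gt)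
  have hBsubq : ∀ s ∈ q, IsSplitting (cobounded κ) p s → B s ⊆ succSet q s := by
    intro s hs hsp a ha
    obtain ⟨t, htp, htd, hagr, htv⟩ := (hB s (hqp hs) hsp).2 ha
    refine ⟨t, (hmem t).mpr ⟨htp, ?_⟩, htd, hagr, htv⟩
    intro i hi hisp
    have hile : i ≤ s.dom := by rw [htd] at hi; exact lt_add_one_iff_ord.mp hi
    rcases lt_or_eq_of_le hile with h1 | h1
    · have hre : t.restrict i hi.le = s.restrict i h1.le :=
        KNode.restrict_eq_restrict i hi.le h1.le fun j hj => hagr j (hj.trans h1)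
      rw [hre] at hisp ⊢
      rw [hagr i h1]
      exact ((hmem s).mp hs).2 i h1 hisp
    · have hre : t.restrict i hi.le = s := by
        rw [KNode.restrict_eq_restrict i hi.le (le_of_eq h1)
          (fun j hj => hagr j (lt_of_lt_of_le hj (le_of_eq h1)))]
        subst h1
        exact KNode.restrict_self s
      rw [hre, h1, htv]
      exact ha
  have hsplitq : ∀ s ∈ q, IsSplitting (cobounded κ) p s → IsSplitting (cobounded κ) q s := by
    intro s hs hsp
    exact cobounded_upward (hB s (hqp hs) hsp).1 (hBsubq s hs hsp) (succSet_subset_Iio q s)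
  have hoq : ∀ s ∈ q, (∃ a, succSet q s = {a}) ∨ succSet q s ∈ cobounded κ := by
    intro s hs
    rcases hpo s (hqp hs) with ⟨a, ha⟩ | hsp
    · left
      refine ⟨a, Set.Subset.antisymm (by rw [← ha]; exact succSet_mono hqp s) ?_⟩
      intro x hx
      rw [Set.mem_singleton_iff] at hx
      subst hx
      have haP : x ∈ succSet p s := by rw [ha]; exact rfl
      obtain ⟨t, htp, htd, hagr, htv⟩ := haP
      refine ⟨t, (hmem t).mpr ⟨htp, ?_⟩, htd, hagr, htv⟩
      intro i hi hisp
      have hile : i ≤ s.dom := by rw [htd] at hi; exact lt_add_one_iff_ord.mp hi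
      rcases lt_or_eq_of_le hile with h1 | h1
      · have hre : t.restrict i hi.le = s.restrict i h1.le :=
          KNode.restrict_eq_restrict i hi.le h1.le fun j hj => hagr j (hj.trans h1)
        rw [hre] at hisp ⊢
        rw [hagr i h1]
        exact ((hmem s).mp hs).2 i h1 hisp
      · exfalso
        have hre : t.restrict i hi.le = s := by
          rw [KNode.restrict_eq_restrict i hi.le (le_of_eq h1)
            (fun j hj => hagr j (lt_of_lt_of_le hj (le_of_eq h1)))]
          subst h1
          exact KNode.restrict_self s
        rw [hre] at hisp
        have h2 : succSet p s ∈ cobounded κ := hisp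
        rw [ha] at h2
        exact singleton_not_cobounded hκ x h2
    · right
      exact hsplitq s hs hsp
  have hsuccne : ∀ u ∈ q, (succSet q u).Nonempty := by
    intro u hu
    rcases hoq u hu with ⟨a, ha⟩ | h
    · exact ⟨a, by rw [ha]; exact rfl⟩
    · exact cobounded_nonempty hκ h
  have hqclosed : ∀ s : KNode κ, Order.IsSuccLimit s.dom →
      (∀ β (h : β < s.dom), s.restrict β h.le ∈ q) → s ∈ q := by
    intro s hsl hres
    refine (hmem s).mpr ⟨hpclosed s hsl fun β h => hqp (hres β h), ?_⟩
    intro i hi hisp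
    have hi1 : i + 1 < s.dom := by rw [Ordinal.add_one_eq_succ]; exact hsl.succ_lt hi
    have hu := (hmem _).mp (hres (i + 1) hi1)
    have hii : i < (s.restrict (i + 1) hi1.le).dom := lt_add_one_ord i
    have hrr : (s.restrict (i + 1) hi1.le).restrict i hii.le = s.restrict i hi.le := by
      rw [KNode.restrict_restrict]
    have h2 := hu.2 i hii (by rw [hrr]; exact hisp)
    rw [hrr] at h2
    rw [KNode.restrict_val, if_pos (lt_add_one_ord i)] at h2
    exact h2
  have hdeg : ∀ s ∈ q, deg q s = deg p s := by
    intro s hs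
    ext i
    constructor
    · rintro ⟨hi, t, htq, h1, h2, h3⟩
      exact ⟨hi, t, hqp htq, h1, h2, h3⟩
    · rintro ⟨hi, t, htp, hti, hagr, hne⟩
      have hi1 : i + 1 ≤ s.dom := add_one_le_iff_ord.mpr hi
      have hti1 : i + 1 ≤ t.dom := add_one_le_iff_ord.mpr hti
      have hsplit : IsSplitting (cobounded κ) p (s.restrict i hi.le) := by
        rcases hpo (s.restrict i hi.le) (hpres s (hqp hs) i hi.le) with ⟨a, ha⟩ | h
        · exfalso
          have hm1 : s.val i ∈ succSet p (s.restrict i hi.le) := by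
            refine ⟨s.restrict (i + 1) hi1, hpres s (hqp hs) _ hi1, rfl, ?_, ?_⟩
            · intro j hj
              have hj' : j < i := hj
              rw [KNode.restrict_val, if_pos (hj'.trans (lt_add_one_ord i)),
                KNode.restrict_val, if_pos hj']
            · show (s.restrict (i + 1) hi1).val i = s.val i
              rw [KNode.restrict_val, if_pos (lt_add_one_ord i)]
          have hm2 : t.val i ∈ succSet p (s.restrict i hi.le) := by
            refine ⟨t.restrict (i + 1) hti1, hpres t htp _ hti1, rfl, ?_, ?_⟩
            · intro j hj
              have hj' : j < i := hj
              rw [KNode.restrict_val, if_pos (hj'.trans (lt_add_one_ord i)),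
                KNode.restrict_val, if_pos hj']
              exact hagr j hj'
            · show (t.restrict (i + 1) hti1).val i = t.val i
              rw [KNode.restrict_val, if_pos (lt_add_one_ord i)]
          rw [ha, Set.mem_singleton_iff] at hm1 hm2
          exact hne (hm2.trans hm1.symm)
        · exact h
      have hsiq : s.restrict i hi.le ∈ q := hqres s hs i hi.le
      obtain ⟨b, hbB, hbne⟩ := cobounded_exists_ne hκ
        (hB _ (hpres s (hqp hs) i hi.le) hsplit).1 (s.val i)
      obtain ⟨u, huq, hud, huagr, huv⟩ := hBsubq _ hsiq hsplit hbB
      refine ⟨hi, u, huq, ?_, ?_, ?_⟩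
      · rw [hud]; exact lt_add_one_ord i
      · intro j hj
        have hj' : j < i := hj
        rw [huagr j hj', KNode.restrict_val, if_pos hj']
      · have huvi : u.val i = b := huv
        rw [huvi]
        exact hbne
  have hiq : ∀ s ∈ q, OrdClosedBelow (deg q s) s.dom := by
    intro s hs
    rw [hdeg s hs]
    exact hpi s (hqp hs)
  have hsplitext : ∀ s ∈ q, ∃ t ∈ q, s.dom ≤ t.dom ∧
      (∀ i, i < s.dom → t.val i = s.val i) ∧ IsSplitting (cobounded κ) q t := by
    intro s hs
    obtain ⟨t, htp, htsd, hagr, htsp⟩ := hpsplit s (hqp hs)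
    set S : Set Ordinal.{u} :=
      {j | s.dom ≤ j ∧ ∃ h : j ≤ t.dom, IsSplitting (cobounded κ) p (t.restrict j h)} with hS
    have hSne : S.Nonempty := ⟨t.dom, htsd, le_rfl, by rw [KNode.restrict_self]; exact htsp⟩
    obtain ⟨hsd, hile, hspl⟩ := (wellFounded_lt (α := Ordinal.{u})).min_mem S hSne
    have htiq : t.restrict _ hile ∈ q := by
      refine (hmem _).mpr ⟨hpres t htp _ hile, ?_⟩
      intro j hj hjsp
      have hj' : j < (wellFounded_lt (α := Ordinal.{u})).min S hSne := hj
      have hrr : (t.restrict _ hile).restrict j hj.le = t.restrict j (hj'.le.trans hile) := by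
        rw [KNode.restrict_restrict]
      rw [hrr] at hjsp
      by_cases hjs : j < s.dom
      · have hre : t.restrict j (hj'.le.trans hile) = s.restrict j hjs.le :=
          KNode.restrict_eq_restrict j _ hjs.le fun k hk => hagr k (hk.trans hjs)
        rw [hre] at hjsp
        rw [hrr, hre]
        rw [KNode.restrict_val, if_pos hj']
        rw [hagr j hjs]
        exact ((hmem s).mp hs).2 j hjs hjsp
      · exfalso
        have hjS : j ∈ S := ⟨le_of_not_gt hjs, hj'.le.trans hile, hjsp⟩
        exact (wellFounded_lt (α := Ordinal.{u})).not_lt_min S hjS hj'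
    refine ⟨t.restrict _ hile, htiq, hsd, ?_, ?_⟩
    · intro j hj
      rw [KNode.restrict_val, if_pos (lt_of_lt_of_le hj hsd), hagr j hj]
    · exact hsplitq _ htiq hspl
  have hqunb : ∀ β, β < κ.ord → ∃ s ∈ q, β ≤ s.dom := by
    intro β hβ
    exact ⟨mkNode κ (branchVal q) β hβ, branch_mem q hroot hsuccne hqclosed β hβ, le_rfl⟩
  have hqne : q.Nonempty := by
    obtain ⟨s0, hs0⟩ := hpne
    exact ⟨s0.restrict 0 zero_le, hroot _ rfl⟩
  exact ⟨⟨⟨⟨hqne, hqres⟩, hqunb, hsplitext, hqclosed⟩, hoq, hiq⟩, hqp, hdeg⟩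
end
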